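/- arXiv:2404.10968 — 2 statements merged into one kernel-verified Lean document; each statement's English description precedes it below -/
import Mathlib

section
/- Let k be a perfect field of characteristic p > 0, let m > 2, and let 1 < a_1 ≤ a_2 ≤ … ≤ a_{m−1} be fixed integers with (a_1, a_2) ≠ (2, 2). For each integer n ≥ a_{m−1} set f_n = x_1^{a_1} + x_2^{a_2} + … + x_{m−1}^{a_{m−1}} + x_m^n ∈ k[x_1, …, x_m]. If p ≥ a_1·a_2·(a_1 + a_2 + 1/a_1 + 1/a_2 − 4)/(a_1·a_2 − a_1 − a_2) and p ≡ −1 (mod lcm(a_1, a_2)), then either fpt(f_n) = 1 or the denominator of fpt(f_n), written in lowest terms, equals p. -/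
open MvPolynomial Filter

/-- The `q`-th Frobenius power of the maximal ideal `(x_1, …, x_m)`,
i.e. the ideal `(x_1^q, …, x_m^q)`. -/
noncomputable def frobeniusPower (k : Type*) [CommRing k] (m q : ℕ) :
    Ideal (MvPolynomial (Fin m) k) :=
  Ideal.span (Set.range fun i : Fin m => (X i : MvPolynomial (Fin m) k) ^ q)

/-- `ν_f(q) = max { N : f^N ∉ (x_1^q, …, x_m^q) }`. -/
noncomputable def nu {k : Type*} [CommRing k] {m : ℕ}
    (f : MvPolynomial (Fin m) k) (q : ℕ) : ℕ :=
  sSup {N : ℕ | f ^ N ∉ frobeniusPower k m q}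

open Finset
open scoped Nat

section Aux

lemma aux_sum_div_le {ι : Type*} (s : Finset ι) (f : ι → ℕ) (c : ℕ) :
    ∑ i ∈ s, f i / c ≤ (∑ i ∈ s, f i) / c := by
  rcases Nat.eq_zero_or_pos c with h | h
  · simp [h]
  · rw [Nat.le_div_iff_mul_le h, Finset.sum_mul]
    exact Finset.sum_le_sum fun i _ => Nat.div_mul_le_self _ _

lemma aux_padicValNat_prod {p : ℕ} [Fact p.Prime] {ι : Type*} (s : Finset ι) (f : ι → ℕ)
    (hf : ∀ i ∈ s, f i ≠ 0) :
    padicValNat p (∏ i ∈ s, f i) = ∑ i ∈ s, padicValNat p (f i) := by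
  classical
  induction s using Finset.induction with
  | empty => simp
  | @insert a s ha ih =>
    rw [Finset.prod_insert ha, Finset.sum_insert ha,
      padicValNat.mul (hf a (Finset.mem_insert_self a s))
        (Finset.prod_ne_zero_iff.mpr fun i hi => hf i (Finset.mem_insert_of_mem hi)),
      ih fun i hi => hf i (Finset.mem_insert_of_mem hi)]

/-- Kummer-type criterion: `p` does not divide the multinomial coefficient iff the base-`p`
additions are carry-free, expressed via floored divisions. -/
lemma aux_not_dvd_multinomial_iff {p : ℕ} (hp : p.Prime) {m : ℕ} (k : Fin m → ℕ) :
    ¬ p ∣ Nat.multinomial Finset.univ k ↔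
      ∀ j : ℕ, (∑ i, k i) / p ^ j = ∑ i : Fin m, k i / p ^ j := by
  haveI : Fact p.Prime := ⟨hp⟩
  set N := ∑ i, k i with hN
  set b := N + 1 with hb
  have hkle : ∀ i : Fin m, k i ≤ N := fun i =>
    Finset.single_le_sum (fun j _ => Nat.zero_le (k j)) (Finset.mem_univ i)
  have hfac : ∀ w : ℕ, w ≤ N → padicValNat p (Nat.factorial w) = ∑ j ∈ Finset.Ico 1 b, w / p ^ j :=
    fun w hw => padicValNat_factorial (lt_of_le_of_lt (Nat.log_le_self p w) (by omega))
  have hspec := Nat.multinomial_spec Finset.univ k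
  have hprod_ne : (∏ i, Nat.factorial (k i)) ≠ 0 :=
    Finset.prod_ne_zero_iff.mpr fun i _ => Nat.factorial_ne_zero _
  have hmul_ne : Nat.multinomial Finset.univ k ≠ 0 := (Nat.multinomial_pos _ _).ne'
  have hval : padicValNat p (∏ i, Nat.factorial (k i)) + padicValNat p (Nat.multinomial Finset.univ k)
      = padicValNat p (Nat.factorial N) := by
    rw [← padicValNat.mul hprod_ne hmul_ne, hspec]
  have hvprod : padicValNat p (∏ i, Nat.factorial (k i))
      = ∑ j ∈ Finset.Ico 1 b, ∑ i : Fin m, k i / p ^ j := by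
    rw [aux_padicValNat_prod _ _ fun i _ => Nat.factorial_ne_zero _]
    rw [Finset.sum_comm]
    exact Finset.sum_congr rfl fun i _ => hfac _ (hkle i)
  have hvN : padicValNat p (Nat.factorial N) = ∑ j ∈ Finset.Ico 1 b, N / p ^ j := hfac N le_rfl
  have hle : ∀ j ∈ Finset.Ico 1 b, ∑ i : Fin m, k i / p ^ j ≤ N / p ^ j :=
    fun j _ => aux_sum_div_le _ _ _
  have hbig : ∀ j : ℕ, b ≤ j → N < p ^ j := fun j hj => by
    have h1 : j < 2 ^ j := Nat.lt_two_pow_self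
    have h2 : (2:ℕ) ^ j ≤ p ^ j := Nat.pow_le_pow_left hp.two_le j
    omega
  constructor
  · intro hdvd j
    have hz : padicValNat p (Nat.multinomial Finset.univ k) = 0 :=
      padicValNat.eq_zero_of_not_dvd hdvd
    rw [hz, add_zero, hvprod, hvN] at hval
    have heq : ∀ j ∈ Finset.Ico 1 b, ∑ i : Fin m, k i / p ^ j = N / p ^ j := by
      by_contra hcon
      push_neg at hcon
      obtain ⟨j₀, hj₀, hne⟩ := hcon
      have : ∑ j ∈ Finset.Ico 1 b, ∑ i : Fin m, k i / p ^ j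
          < ∑ j ∈ Finset.Ico 1 b, N / p ^ j :=
        Finset.sum_lt_sum hle ⟨j₀, hj₀, lt_of_le_of_ne (hle j₀ hj₀) hne⟩
      omega
    rcases Nat.eq_zero_or_pos j with hj | hj
    · subst hj; simp [hN]
    · rcases lt_or_ge j b with hjb | hjb
      · exact (heq j (Finset.mem_Ico.mpr ⟨hj, hjb⟩)).symm
      · have h1 : N / p ^ j = 0 := Nat.div_eq_of_lt (hbig j hjb)
        have h2 : ∀ i : Fin m, k i / p ^ j = 0 := fun i =>
          Nat.div_eq_of_lt (lt_of_le_of_lt (hkle i) (hbig j hjb))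
        simp [h1, h2]
  · intro hall hdvd
    have : ∑ j ∈ Finset.Ico 1 b, ∑ i : Fin m, k i / p ^ j
        = ∑ j ∈ Finset.Ico 1 b, N / p ^ j :=
      Finset.sum_congr rfl fun j _ => (hall j).symm
    rw [hvprod, hvN, this] at hval
    have hz : padicValNat p (Nat.multinomial Finset.univ k) = 0 := by omega
    have := padicValNat.eq_zero_iff.mp hz
    rcases this with h | h | h
    · exact hp.one_lt.ne' h
    · exact hmul_ne h
    · exact h hdvd

end Aux

/-- Carry-free division: if `x + y + 1 = c * p^e` then the base-`p` digits of `x` and `y`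
sum to `p-1` in each position, expressed via divisions. -/
lemma aux_carry_div {p : ℕ} (hp : 1 ≤ p) {x y c e j : ℕ} (hj : j ≤ e) (hc : 1 ≤ c)
    (h : x + y + 1 = c * p ^ e) : x / p ^ j + y / p ^ j + 1 = c * p ^ (e - j) := by
  set P := p ^ j with hPdef
  set Q := c * p ^ (e - j) with hQdef
  have hP : 0 < P := pow_pos hp j
  have hQ : 0 < Q := Nat.mul_pos hc (pow_pos hp _)
  have hkey : x + y + 1 = Q * P := by
    rw [h, hQdef, mul_assoc, ← pow_add]
    congr 2
    omega
  have hx := Nat.div_add_mod x P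
  have hy := Nat.div_add_mod y P
  have hvx : x % P < P := Nat.mod_lt _ hP
  have hvy : y % P < P := Nat.mod_lt _ hP
  set u := x / P
  set v := x % P
  set w := y / P
  set z := y % P
  -- key linear relation with products as atoms
  have hlin : P * u + v + (P * w + z) + 1 = Q * P := by omega
  have hD : u + w < Q := by
    by_contra hD
    push_neg at hD
    have h2 : Q * P ≤ (u + w) * P := Nat.mul_le_mul_right _ hD
    have h3 : (u + w) * P = P * u + P * w := by ring
    omega
  obtain ⟨E, hE⟩ : ∃ E, Q = u + w + E := ⟨Q - (u + w), by omega⟩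
  have h4 : Q * P = P * u + P * w + E * P := by rw [hE]; ring
  have h5 : v + z + 1 = E * P := by omega
  have hE1 : E < 2 := by
    by_contra hE2
    push_neg at hE2
    have : 2 * P ≤ E * P := Nat.mul_le_mul_right _ hE2
    omega
  have hE0 : E ≠ 0 := by
    rintro rfl
    simp only [Nat.zero_mul] at h5
    omega
  have : E = 1 := by omega
  omega

open MvPolynomial

lemma aux_prod_monomial {R : Type*} [CommSemiring R] {σ ι : Type*} (s : Finset ι)
    (g : ι → (σ →₀ ℕ)) : ∏ i ∈ s, monomial (g i) (1 : R) = monomial (∑ i ∈ s, g i) 1 := by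
  classical
  induction s using Finset.induction with
  | empty => simp
  | @insert a s ha ih =>
    rw [Finset.prod_insert ha, Finset.sum_insert ha, ih, monomial_mul, one_mul]

lemma aux_single_sum {m : ℕ} (g : Fin m → ℕ) :
    ∑ i : Fin m, Finsupp.single i (g i) = Finsupp.equivFunOnFinite.symm g := by
  ext j
  rw [Finset.sum_apply']
  simp [Finsupp.single_apply]

lemma aux_expand {R : Type*} [CommSemiring R] {m : ℕ} (c : Fin m → ℕ) (N : ℕ) :
    (∑ i, (X i : MvPolynomial (Fin m) R) ^ c i) ^ N =
      ∑ k ∈ piAntidiag univ N, (Nat.multinomial univ k : MvPolynomial (Fin m) R) *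
        monomial (Finsupp.equivFunOnFinite.symm fun i => c i * k i) 1 := by
  rw [Finset.sum_pow_eq_sum_piAntidiag]
  refine Finset.sum_congr rfl fun k hk => ?_
  congr 1
  have h1 : ∀ i : Fin m, ((X i : MvPolynomial (Fin m) R) ^ c i) ^ k i
      = monomial (Finsupp.single i (c i * k i)) 1 := by
    intro i
    rw [← pow_mul, X_pow_eq_monomial]
  rw [Finset.prod_congr rfl fun i _ => h1 i, aux_prod_monomial, aux_single_sum]

lemma aux_coeff_expand {R : Type*} [CommSemiring R] {m : ℕ} (c : Fin m → ℕ)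
    (hc : ∀ i, c i ≠ 0) (N : ℕ) (k0 : Fin m → ℕ) (hk0 : k0 ∈ piAntidiag univ N) :
    coeff (Finsupp.equivFunOnFinite.symm fun i => c i * k0 i)
        ((∑ i, (X i : MvPolynomial (Fin m) R) ^ c i) ^ N)
      = (Nat.multinomial univ k0 : R) := by
  classical
  rw [aux_expand, coeff_sum]
  rw [Finset.sum_eq_single_of_mem k0 hk0]
  · rw [← C_eq_coe_nat, coeff_C_mul, coeff_monomial, if_pos rfl, mul_one]
  · intro k hk hne
    rw [← C_eq_coe_nat, coeff_C_mul, coeff_monomial, if_neg, mul_zero]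
    intro heq
    apply hne
    funext i
    have := congrArg (fun f => f i) (Finsupp.equivFunOnFinite.symm.injective heq)
    simp only at this
    exact Nat.eq_of_mul_eq_mul_left (Nat.pos_of_ne_zero (hc i)) this

lemma aux_exists_le_sum {m : ℕ} (f : Fin m → ℕ) (c : ℕ) (h : c ≤ ∑ i, f i) :
    ∃ D : Fin m → ℕ, (∀ i, D i ≤ f i) ∧ ∑ i, D i = c := by
  classical
  induction c with
  | zero => exact ⟨fun _ => 0, fun i => Nat.zero_le _, by simp⟩
  | succ c ih =>
    obtain ⟨D, hD, hsum⟩ := ih (by omega)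
    have hex : ∃ i, D i < f i := by
      by_contra hcon
      push_neg at hcon
      have : ∑ i, f i ≤ ∑ i, D i := Finset.sum_le_sum fun i _ => hcon i
      omega
    obtain ⟨i, hi⟩ := hex
    refine ⟨Function.update D i (D i + 1), fun j => ?_, ?_⟩
    · rcases eq_or_ne j i with rfl | hj
      · rw [Function.update_self]; omega
      · rw [Function.update_of_ne hj]; exact hD j
    · rw [Finset.sum_update_of_mem (Finset.mem_univ i)]
      rw [← hsum, Finset.sum_eq_sum_sdiff_singleton_add (Finset.mem_univ i) D]
      omega

lemma aux_delta {p s : ℕ} (hp : 1 ≤ p) (hs : 2 ≤ s) (hdvd : s ∣ p + 1) :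
    s * ((p - 1) / s) + s = p + 1 := by
  obtain ⟨u, hu⟩ := hdvd
  have hu1 : 1 ≤ u := by
    rcases Nat.eq_zero_or_pos u with rfl | h
    · omega
    · exact h
  obtain ⟨u', rfl⟩ : ∃ u', u = u' + 1 := ⟨u - 1, by omega⟩
  have h1 : p - 1 = s * u' + (s - 2) := by
    have : s * (u' + 1) = s * u' + s := by ring
    omega
  have h2 : (p - 1) / s = u' := by
    rw [h1, Nat.mul_add_div (by omega : 0 < s), Nat.div_eq_of_lt (by omega), add_zero]
  rw [h2]
  have : s * (u' + 1) = s * u' + s := by ring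
  omega

lemma aux_sum_two {m : ℕ} (i0 i1 : Fin m) (hne : i0 ≠ i1) (x y : ℕ) :
    ∑ i : Fin m, (if i = i0 then x else if i = i1 then y else 0) = x + y := by
  classical
  have h : (fun i : Fin m => if i = i0 then x else if i = i1 then y else 0)
      = fun i => (if i = i0 then x else 0) + (if i = i1 then y else 0) := by
    funext i
    rcases eq_or_ne i i0 with rfl | h0
    · simp [if_neg (by exact hne)]
    · simp [h0]
  rw [h, Finset.sum_add_distrib, Finset.sum_ite_eq' , Finset.sum_ite_eq',
    if_pos (Finset.mem_univ _), if_pos (Finset.mem_univ _)]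


/-- Exact value of `ν_f(p^(e+1))` for a diagonal hypersurface under the divisibility
hypotheses. -/
lemma aux_nu_eq {p : ℕ} (hp : p.Prime) {K : Type*} [Field K] [CharP K p]
    {m : ℕ} (d : Fin m → ℕ) (hd : ∀ i, 2 ≤ d i)
    (i0 i1 : Fin m) (hne01 : i0 ≠ i1)
    (hs : d i0 ∣ p + 1) (ht : d i1 ∣ p + 1)
    (hst : d i0 + d i1 + 1 ≤ d i0 * d i1)
    (e : ℕ) :
    nu (∑ i, (X i : MvPolynomial (Fin m) K) ^ d i) (p ^ (e + 1)) + 1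
      = min (1 + ∑ i, (p - 1) / d i) p * p ^ e := by
  classical
  have hp1 : 1 ≤ p := hp.pos
  have hp2 : 2 ≤ p := hp.two_le
  set s := d i0 with hsdef
  set t := d i1 with htdef
  have hs2 : 2 ≤ s := hd i0
  have ht2 : 2 ≤ t := hd i1
  set δ : Fin m → ℕ := fun i => (p - 1) / d i with hδ
  set Kc := 1 + ∑ i, δ i with hKc
  set K' := min Kc p with hK'
  set P := p ^ e with hP
  set q := p ^ (e + 1) with hq
  have hqPp : q = P * p := by rw [hq, hP, pow_succ]
  have hPpos : 0 < P := pow_pos hp.pos e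
  have hqpos : 0 < q := pow_pos hp.pos _
  have hdpos : ∀ i, 0 < d i := fun i => by have := hd i; omega
  have hδle : ∀ i, d i * δ i ≤ p - 1 := fun i => by
    rw [hδ, mul_comm]
    exact Nat.div_mul_le_self _ _
  have hK'1 : 1 ≤ K' := le_min (by omega) hp.pos
  have hK'p : K' ≤ p := min_le_right _ _
  have hK'Kc : K' ≤ Kc := min_le_left _ _
  set f := ∑ i, (X i : MvPolynomial (Fin m) K) ^ d i with hf
  -- ===================== upper bound =====================
  have hupper : ∀ N, K' * P ≤ N → f ^ N ∈ frobeniusPower K m q := by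
    have hbase : f ^ (K' * P) ∈ frobeniusPower K m q := by
      rw [hf, aux_expand]
      apply Ideal.sum_mem
      intro v hv
      rcases em (p ∣ Nat.multinomial univ v) with hdvd | hnd
      · have hz : ((Nat.multinomial univ v : ℕ) : MvPolynomial (Fin m) K) = 0 :=
          (CharP.cast_eq_zero_iff _ p _).mpr hdvd
        rw [hz, zero_mul]
        exact Ideal.zero_mem _
      · have hdig := (aux_not_dvd_multinomial_iff hp v).mp hnd
        have hsumv : ∑ i, v i = K' * P := (Finset.mem_piAntidiag.mp hv).1
        have hex : ∃ i, q ≤ d i * v i := by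
          by_contra hcon
          push_neg at hcon
          rcases le_or_gt Kc p with hKp | hpK
          · have hKK' : K' = Kc := min_eq_left hKp
            have h2 := hdig e
            have h1 : (∑ i, v i) / P = K' := by
              rw [hsumv, Nat.mul_div_cancel _ hPpos]
            have hq1 : (q - 1) / P = p - 1 := by
              have hd1 : (q - 1) / p ^ e + 0 / p ^ e + 1 = p * p ^ (e - e) :=
                aux_carry_div hp1 le_rfl hp1 (by
                  have hh : p * p ^ e = P * p := by rw [hP]; ring
                  omega)
              rw [Nat.sub_self, pow_zero, mul_one, Nat.zero_div] at hd1
              rw [← hP] at hd1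
              omega
            have h3 : ∀ i, v i / P ≤ δ i := by
              intro i
              have ha : d i * (v i / P) ≤ d i * v i / P := Nat.mul_div_le_mul_div_assoc _ _ _
              have hb : d i * v i ≤ q - 1 := by have := hcon i; omega
              have hcc : d i * v i / P ≤ (q - 1) / P := Nat.div_le_div_right hb
              have hdd : d i * (v i / P) ≤ p - 1 := by omega
              rw [hδ]
              exact (Nat.le_div_iff_mul_le (hdpos i)).mpr (by rw [mul_comm]; exact hdd)
            have h4 : K' ≤ ∑ i, δ i := by
              calc K' = (∑ i, v i) / P := h1.symm
                _ = ∑ i, v i / P := by rw [← hP] at h2; exact h2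
                _ ≤ ∑ i, δ i := Finset.sum_le_sum fun i _ => h3 i
            omega
          · have hKK' : K' = p := min_eq_right (le_of_lt hpK)
            have h2 := hdig (e + 1)
            have h1 : (∑ i, v i) / p ^ (e + 1) = 1 := by
              rw [hsumv, hKK']
              have : p * P = p ^ (e + 1) := by rw [hP, pow_succ]; ring
              rw [this, ← hq, Nat.div_self hqpos]
            have h3 : ∀ i, v i / p ^ (e + 1) = 0 := fun i => Nat.div_eq_of_lt (by
              have h5 := hcon i
              have h6 : v i ≤ d i * v i := Nat.le_mul_of_pos_left _ (hdpos i)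
              rw [hq] at h5
              omega)
            rw [h1, Finset.sum_congr rfl fun i _ => h3 i] at h2
            simp at h2
        obtain ⟨i, hqle⟩ := hex
        set μ := Finsupp.equivFunOnFinite.symm fun i => d i * v i with hμ
        have hle : Finsupp.single i q ≤ μ := by
          rw [Finsupp.single_le_iff]
          simpa [hμ] using hqle
        have hmono : (monomial μ (1 : K) : MvPolynomial (Fin m) K)
            = X i ^ q * monomial (μ - Finsupp.single i q) 1 := by
          rw [X_pow_eq_monomial, monomial_mul, one_mul, add_tsub_cancel_of_le hle]
        rw [hmono]
        exact Ideal.mul_mem_left _ _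
          (Ideal.mul_mem_right _ _ (Ideal.subset_span ⟨i, rfl⟩))
    intro N hN
    obtain ⟨M, rfl⟩ : ∃ M, N = K' * P + M := ⟨N - K' * P, by omega⟩
    rw [pow_add]
    exact Ideal.mul_mem_right _ _ hbase
  -- ===================== lower bound =====================
  have hdelta0 : s * δ i0 + s = p + 1 := aux_delta hp1 hs2 hs
  have hdelta1 : t * δ i1 + t = p + 1 := aux_delta hp1 ht2 ht
  set rr := P / t with hrr
  have hdm := Nat.div_add_mod P t
  rw [← hrr] at hdm
  have hmlt : P % t < t := Nat.mod_lt _ (by omega)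
  have htrr : t * rr ≤ P := by omega
  have htrr2 : P + 1 ≤ t * rr + t := by omega
  have hrrP : rr ≤ P - 1 := by
    have h1 : P / t ≤ P / 2 := Nat.div_le_div_left ht2 (by omega)
    have h2 : P / 2 ≤ P - 1 := by omega
    omega
  set B := P - 1 - rr with hB
  have hrB : rr + B + 1 = P := by omega
  obtain ⟨D, hDle, hDsum⟩ := aux_exists_le_sum δ (K' - 1) (by omega)
  set rv : Fin m → ℕ := fun i => if i = i0 then rr else if i = i1 then B else 0 with hrv
  set kv : Fin m → ℕ := fun i => D i * P + rv i with hkv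
  have hrvsum : ∑ i, rv i = rr + B := aux_sum_two i0 i1 hne01 rr B
  have hkvsum : ∑ i, kv i + 1 = K' * P := by
    have h0 : ∑ i, kv i = (∑ i, D i) * P + ∑ i, rv i := by
      rw [hkv, Finset.sum_add_distrib, Finset.sum_mul]
    have h5 : (K' - 1) * P + P = K' * P := by
      have h6 : K' - 1 + 1 = K' := by omega
      calc (K' - 1) * P + P = (K' - 1 + 1) * P := by ring
        _ = K' * P := by rw [h6]
    rw [h0, hDsum, hrvsum]
    omega
  have hKP1 : 1 ≤ K' * P := Nat.mul_pos hK'1 hPpos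
  -- the two key inequalities
  have hstar : s * rr + P + 1 ≤ s * P := by
    rcases lt_or_ge P t with hPt | htP
    · have h0 : rr = 0 := Nat.div_eq_of_lt hPt
      have h1 : 2 * P ≤ s * P := Nat.mul_le_mul_right _ hs2
      rw [h0, mul_zero]
      omega
    · have key : t * (s * rr + P + 1) ≤ t * (s * P) := by
        have h1 : t * (s * rr) = s * (t * rr) := by ring
        have h2 : s * (t * rr) ≤ s * P := Nat.mul_le_mul_left _ htrr
        have h3 : s * P + t * P + t ≤ s * (t * P) := by
          have h4 : (s + t + 1) * P ≤ s * t * P := Nat.mul_le_mul_right _ hst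
          have h5 : (s + t + 1) * P = s * P + t * P + P := by ring
          have h6 : s * t * P = s * (t * P) := by ring
          omega
        calc t * (s * rr + P + 1) = t * (s * rr) + t * P + t := by ring
          _ = s * (t * rr) + t * P + t := by rw [h1]
          _ ≤ s * P + t * P + t := by omega
          _ ≤ s * (t * P) := h3
          _ = t * (s * P) := by ring
      exact Nat.le_of_mul_le_mul_left key (by omega)
  have hstarB : t * B + P + 1 ≤ t * P := by
    have h1 : t * rr + t * B + t = t * P := by
      have h2 : t * (rr + B + 1) = t * P := by rw [hrB]
      calc t * rr + t * B + t = t * (rr + B + 1) := by ring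
        _ = t * P := h2
    omega
  have hcon2 : ∀ i, d i * kv i < q := by
    intro i
    have hkvi : kv i = D i * P + rv i := rfl
    rcases eq_or_ne i i0 with heq0 | h0
    · rw [heq0]
      have h1 : rv i0 = rr := if_pos rfl
      have h2 : s * (D i0 * P + rr) ≤ s * (δ i0 * P + rr) :=
        Nat.mul_le_mul_left _ (Nat.add_le_add_right (Nat.mul_le_mul_right _ (hDle i0)) _)
      have h3 : s * (δ i0 * P + rr) = s * δ i0 * P + s * rr := by ring
      have h4 : s * δ i0 * P + s * P = (p + 1) * P := by
        have h5 : (s * δ i0 + s) * P = (p + 1) * P := by rw [hdelta0]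
        calc s * δ i0 * P + s * P = (s * δ i0 + s) * P := by ring
          _ = (p + 1) * P := h5
      have h6 : (p + 1) * P = P * p + P := by ring
      have hgoal : s * (D i0 * P + rr) < q := by omega
      calc d i0 * kv i0 = s * (D i0 * P + rv i0) := rfl
        _ = s * (D i0 * P + rr) := by rw [h1]
        _ < q := hgoal
    rcases eq_or_ne i i1 with heq1 | h1
    · rw [heq1]
      have hv1 : rv i1 = B := by
        rw [hrv]
        simp [Ne.symm hne01]
      have h2 : t * (D i1 * P + B) ≤ t * (δ i1 * P + B) :=
        Nat.mul_le_mul_left _ (Nat.add_le_add_right (Nat.mul_le_mul_right _ (hDle i1)) _)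
      have h3 : t * (δ i1 * P + B) = t * δ i1 * P + t * B := by ring
      have h4 : t * δ i1 * P + t * P = (p + 1) * P := by
        have h5 : (t * δ i1 + t) * P = (p + 1) * P := by rw [hdelta1]
        calc t * δ i1 * P + t * P = (t * δ i1 + t) * P := by ring
          _ = (p + 1) * P := h5
      have h6 : (p + 1) * P = P * p + P := by ring
      have hgoal : t * (D i1 * P + B) < q := by omega
      calc d i1 * kv i1 = t * (D i1 * P + rv i1) := rfl
        _ = t * (D i1 * P + B) := by rw [hv1]
        _ < q := hgoal
    · have hv0 : rv i = 0 := by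
        rw [hrv]
        simp only [if_neg h0, if_neg h1]
      have h2 : d i * (D i * P) ≤ d i * (δ i * P) :=
        Nat.mul_le_mul_left _ (Nat.mul_le_mul_right _ (hDle i))
      have h3 : d i * (δ i * P) = d i * δ i * P := by ring
      have h4 : d i * δ i * P ≤ (p - 1) * P := Nat.mul_le_mul_right _ (hδle i)
      have h5 : (p - 1) * P + P = p * P := by
        have h6 : (p - 1 + 1) = p := by omega
        calc (p - 1) * P + P = (p - 1 + 1) * P := by ring
          _ = p * P := by rw [h6]
      have h7 : p * P = P * p := by ring
      have hgoal : d i * (D i * P + 0) < q := by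
        rw [add_zero]
        omega
      calc d i * kv i = d i * (D i * P + rv i) := rfl
        _ = d i * (D i * P + 0) := by rw [hv0]
        _ < q := hgoal
  have hdig2 : ∀ j, (∑ i, kv i) / p ^ j = ∑ i : Fin m, kv i / p ^ j := by
    intro j
    rcases le_or_gt j e with hj | hj
    · have hsplit : ∀ i, kv i / p ^ j = D i * p ^ (e - j) + rv i / p ^ j := by
        intro i
        have hPe : P = p ^ (e - j) * p ^ j := by
          rw [hP, ← pow_add]
          congr 1
          omega
        have h8 : kv i = rv i + D i * p ^ (e - j) * p ^ j := by
          have : kv i = D i * P + rv i := rfl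
          rw [this, hPe]
          ring
        rw [h8, Nat.add_mul_div_right _ _ (pow_pos hp.pos j), add_comm]
      have h6 : ∑ i : Fin m, rv i / p ^ j = rr / p ^ j + B / p ^ j := by
        have h7 : ∀ i : Fin m, rv i / p ^ j
            = (if i = i0 then rr / p ^ j else if i = i1 then B / p ^ j else 0) := by
          intro i
          rw [hrv]
          split_ifs <;> simp_all
        rw [Finset.sum_congr rfl fun i _ => h7 i, aux_sum_two i0 i1 hne01]
      have hL : ∑ i : Fin m, kv i / p ^ j
          = (K' - 1) * p ^ (e - j) + (rr / p ^ j + B / p ^ j) := by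
        rw [Finset.sum_congr rfl fun i _ => hsplit i, Finset.sum_add_distrib,
          ← Finset.sum_mul, hDsum, h6]
      have h7 : rr / p ^ j + B / p ^ j + 1 = 1 * p ^ (e - j) :=
        aux_carry_div hp1 hj le_rfl (by rw [one_mul, ← hP]; exact hrB)
      have h8 : (∑ i, kv i) / p ^ j + 0 / p ^ j + 1 = K' * p ^ (e - j) :=
        aux_carry_div hp1 hj hK'1 (by rw [add_zero, ← hP]; exact hkvsum)
      have h9 : (K' - 1) * p ^ (e - j) + p ^ (e - j) = K' * p ^ (e - j) := by
        have h10 : K' - 1 + 1 = K' := by omega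
        calc (K' - 1) * p ^ (e - j) + p ^ (e - j) = (K' - 1 + 1) * p ^ (e - j) := by ring
          _ = K' * p ^ (e - j) := by rw [h10]
      rw [Nat.zero_div] at h8
      omega
    · have hlt : ∑ i, kv i < p ^ j := by
        have h2 : K' * P ≤ p * P := Nat.mul_le_mul_right _ hK'p
        have h3 : p * P = p ^ (e + 1) := by rw [hP, pow_succ]; ring
        have h4 : p ^ (e + 1) ≤ p ^ j := Nat.pow_le_pow_right hp.pos (by omega)
        omega
      rw [Nat.div_eq_of_lt hlt, Finset.sum_eq_zero fun i _ => Nat.div_eq_of_lt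
        (lt_of_le_of_lt (Finset.single_le_sum (f := kv) (fun i _ => Nat.zero_le _)
          (Finset.mem_univ i)) hlt)]
  have hnd : ¬ p ∣ Nat.multinomial univ kv := (aux_not_dvd_multinomial_iff hp kv).mpr hdig2
  have hkvmem : kv ∈ piAntidiag univ (K' * P - 1) :=
    Finset.mem_piAntidiag.mpr ⟨by
      show ∑ i, kv i = K' * P - 1
      omega, fun i _ => Finset.mem_univ i⟩
  have hcoeff : coeff (Finsupp.equivFunOnFinite.symm fun i => d i * kv i) (f ^ (K' * P - 1))
      = (Nat.multinomial univ kv : K) := by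
    rw [hf]
    exact aux_coeff_expand d (fun i => by have := hd i; omega) _ kv hkvmem
  have hne0 : (Nat.multinomial univ kv : K) ≠ 0 := fun h =>
    hnd ((CharP.cast_eq_zero_iff K p _).mp h)
  have hlower : f ^ (K' * P - 1) ∉ frobeniusPower K m q := by
    intro hmem
    rw [frobeniusPower] at hmem
    have hrange : (Set.range fun i : Fin m => (X i : MvPolynomial (Fin m) K) ^ q)
        = (fun sA => monomial sA (1 : K)) '' Set.range (fun i : Fin m => Finsupp.single i q) := by
      rw [← Set.range_comp]
      exact congrArg _ (funext fun i => X_pow_eq_monomial)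
    rw [hrange, mem_ideal_span_monomial_image] at hmem
    obtain ⟨sA, hsA, hsAle⟩ := hmem (Finsupp.equivFunOnFinite.symm fun i => d i * kv i)
      (by rw [mem_support_iff, hcoeff]; exact hne0)
    obtain ⟨i, rfl⟩ := hsA
    rw [Finsupp.single_le_iff] at hsAle
    have h1 : q ≤ d i * kv i := by simpa using hsAle
    exact absurd h1 (not_le.mpr (hcon2 i))
  -- ===================== conclusion =====================
  have hGreat : IsGreatest {N : ℕ | f ^ N ∉ frobeniusPower K m q} (K' * P - 1) := by
    constructor
    · exact hlower
    · intro N hN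
      by_contra hcc
      push_neg at hcc
      exact hN (hupper N (by omega))
  have hnu : nu f q = K' * P - 1 := hGreat.csSup_eq
  rw [hnu]
  omega


/-- Theorem (stability of denominators): for the family of diagonal hypersurfaces
`f_n = x_1^{a_1} + … + x_{m-1}^{a_{m-1}} + x_m^n`, if
`p ≥ a_1 a_2 (a_1 + a_2 + 1/a_1 + 1/a_2 - 4)/(a_1 a_2 - a_1 - a_2)` and
`p ≡ -1 (mod lcm(a_1, a_2))`, then either `fpt(f_n) = 1` or the denominator of
`fpt(f_n)` in lowest terms equals `p`.  (The indices of the exponents are shifted: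
`a 0 = a_1`, etc.)  The F-pure threshold `F = fpt(f_n)` is characterized as the
limit of `ν_{f_n}(p^e)/p^e` as `e → ∞`. -/
theorem stmt0 {p m n : ℕ} (hp : p.Prime) {k : Type*} [Field k] [PerfectField k]
    [CharP k p] (hm : 2 < m) (a : ℕ → ℕ)
    (ha0 : 1 < a 0)
    (hmono : ∀ i j : ℕ, i ≤ j → j ≤ m - 2 → a i ≤ a j)
    (hne : ¬(a 0 = 2 ∧ a 1 = 2))
    (hn : a (m - 2) ≤ n)
    (hpge : ((a 0 : ℚ) * a 1 * ((a 0 : ℚ) + (a 1 : ℚ) + 1 / (a 0 : ℚ) + 1 / (a 1 : ℚ) - 4)) /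
        ((a 0 : ℚ) * (a 1 : ℚ) - (a 0 : ℚ) - (a 1 : ℚ)) ≤ (p : ℚ))
    (hpmod : (p : ℤ) ≡ -1 [ZMOD (Nat.lcm (a 0) (a 1) : ℤ)])
    (F : ℚ)
    (hF : Tendsto (fun e : ℕ =>
        (nu (∑ i : Fin m, (X i : MvPolynomial (Fin m) k) ^
            (if (i : ℕ) = m - 1 then n else a (i : ℕ))) (p ^ (e + 1)) : ℝ) /
          (p : ℝ) ^ (e + 1))
      atTop (nhds (F : ℝ))) :
    F = 1 ∨ F.den = p := by

  classical
  have hs2 : 2 ≤ a 0 := ha0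
  have hstle : a 0 ≤ a 1 := hmono 0 1 (by omega) (by omega)
  have ht2 : 2 ≤ a 1 := le_trans hs2 hstle
  have hstprod : a 0 + a 1 + 1 ≤ a 0 * a 1 := by
    rcases Nat.lt_or_ge (a 0) 3 with h3 | h3
    · have hs2' : a 0 = 2 := by omega
      have ht3 : 3 ≤ a 1 := by
        rcases Nat.lt_or_ge (a 1) 3 with h4 | h4
        · exact absurd ⟨hs2', by omega⟩ hne
        · exact h4
      rw [hs2']
      omega
    · have h5 : 3 * a 1 ≤ a 0 * a 1 := Nat.mul_le_mul_right _ h3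
      omega
  have hdvd : Nat.lcm (a 0) (a 1) ∣ p + 1 := by
    have h1 : ((Nat.lcm (a 0) (a 1) : ℤ)) ∣ (-1 : ℤ) - (p : ℤ) := Int.ModEq.dvd hpmod
    have h2 : ((Nat.lcm (a 0) (a 1) : ℤ)) ∣ ((p : ℤ) + 1) := by
      have h3 := (dvd_neg (α := ℤ)).mpr h1
      simpa using h3
    exact_mod_cast h2
  have hsdvd : a 0 ∣ p + 1 := (Nat.dvd_lcm_left _ _).trans hdvd
  have htdvd : a 1 ∣ p + 1 := (Nat.dvd_lcm_right _ _).trans hdvd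
  set i0 : Fin m := ⟨0, by omega⟩ with hi0
  set i1 : Fin m := ⟨1, by omega⟩ with hi1
  have hne01 : i0 ≠ i1 := by
    rw [hi0, hi1]
    simp [Fin.ext_iff]
  set d : Fin m → ℕ := fun i => if (i : ℕ) = m - 1 then n else a (i : ℕ) with hd
  have hd0 : d i0 = a 0 := by
    show (if ((i0 : Fin m) : ℕ) = m - 1 then n else a ((i0 : Fin m) : ℕ)) = a 0
    rw [hi0]
    norm_num
    omega
  have hd1 : d i1 = a 1 := by
    show (if ((i1 : Fin m) : ℕ) = m - 1 then n else a ((i1 : Fin m) : ℕ)) = a 1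
    rw [hi1]
    norm_num
    omega
  have hdge : ∀ i, 2 ≤ d i := by
    intro i
    rw [hd]
    simp only
    split_ifs with h
    · exact le_trans (le_trans ha0 (hmono 0 (m - 2) (by omega) le_rfl)) hn
    · have hile : (i : ℕ) ≤ m - 2 := by have := i.isLt; omega
      exact le_trans ha0 (hmono 0 (i : ℕ) (by omega) hile)
  have hnu := fun e : ℕ => aux_nu_eq hp (K := k) d hdge i0 i1 hne01
    (by rw [hd0]; exact hsdvd) (by rw [hd1]; exact htdvd)
    (by rw [hd0, hd1]; exact hstprod) e
  set Kc := 1 + ∑ i, (p - 1) / d i with hKc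
  set K' := min Kc p with hK'
  set f : MvPolynomial (Fin m) k := ∑ i, (X i : MvPolynomial (Fin m) k) ^ d i with hf
  have hK'1 : 1 ≤ K' := le_min (by omega) hp.pos
  have hK'p : K' ≤ p := min_le_right _ _
  have hcast : ∀ e : ℕ, ((nu f (p ^ (e + 1)) : ℝ)) = (K' : ℝ) * (p : ℝ) ^ e - 1 := by
    intro e
    have h1 := hnu e
    have h2 : ((nu f (p ^ (e + 1)) + 1 : ℕ) : ℝ) = ((K' * p ^ e : ℕ) : ℝ) := by
      rw [h1]
    push_cast at h2
    linarith
  have hp0 : (0 : ℝ) < (p : ℝ) := by exact_mod_cast hp.pos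
  have heq : ∀ e : ℕ, ((K' : ℝ) * (p : ℝ) ^ e - 1) / (p : ℝ) ^ (e + 1)
      = (K' : ℝ) / (p : ℝ) - ((1 : ℝ) / (p : ℝ)) ^ (e + 1) := by
    intro e
    rw [div_pow, one_pow, pow_succ]
    have hpe : (p : ℝ) ^ e ≠ 0 := by positivity
    field_simp
  have hplim : Filter.Tendsto (fun e : ℕ => ((K' : ℝ) * (p : ℝ) ^ e - 1) / (p : ℝ) ^ (e + 1))
      Filter.atTop (nhds ((K' : ℝ) / (p : ℝ))) := by
    have h2 : Filter.Tendsto (fun e : ℕ => (K' : ℝ) / (p : ℝ) - ((1 : ℝ) / (p : ℝ)) ^ (e + 1))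
        Filter.atTop (nhds ((K' : ℝ) / (p : ℝ) - 0)) := by
      apply Filter.Tendsto.sub tendsto_const_nhds
      have h3 : Filter.Tendsto (fun e : ℕ => ((1 : ℝ) / (p : ℝ)) ^ e) Filter.atTop (nhds 0) :=
        tendsto_pow_atTop_nhds_zero_of_lt_one (by positivity)
          (by rw [div_lt_one hp0]; exact_mod_cast hp.one_lt)
      exact h3.comp (Filter.tendsto_add_atTop_nat 1)
    rw [sub_zero] at h2
    exact Filter.Tendsto.congr (fun e => (heq e).symm) h2
  have hFlim : Filter.Tendsto (fun e : ℕ => ((nu f (p ^ (e + 1)) : ℝ)) / (p : ℝ) ^ (e + 1))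
      Filter.atTop (nhds ((K' : ℝ) / (p : ℝ))) := by
    refine Filter.Tendsto.congr (fun e => ?_) hplim
    rw [hcast e]
  have hFK : (F : ℝ) = (K' : ℝ) / (p : ℝ) := tendsto_nhds_unique hF hFlim
  have hFQ : F = (K' : ℚ) / (p : ℚ) := by
    have h4 : ((((K' : ℚ)) / (p : ℚ) : ℚ) : ℝ) = (K' : ℝ) / (p : ℝ) := by push_cast; ring
    exact_mod_cast hFK.trans h4.symm
  by_cases hKp : p ≤ Kc
  · left
    have hKK' : K' = p := min_eq_right hKp
    rw [hFQ, hKK', div_self]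
    exact Nat.cast_ne_zero.mpr hp.pos.ne'
  · right
    have hKlt : K' < p := by
      have : K' ≤ Kc := min_le_left _ _
      omega
    have hpndvd : ¬ (p ∣ K') := fun h => absurd (Nat.le_of_dvd (by omega) h) (by omega)
    have hcop : Nat.Coprime (Int.natAbs (K' : ℤ)) (Int.natAbs (p : ℤ)) := by
      simp only [Int.natAbs_natCast]
      exact Nat.coprime_comm.mp ((hp.coprime_iff_not_dvd).mpr hpndvd)
    have hden := Rat.den_div_eq_of_coprime (a := (K' : ℤ)) (b := (p : ℤ))
      (by exact_mod_cast hp.pos) hcop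
    have h5 : (((K' : ℤ) : ℚ) / ((p : ℤ) : ℚ)) = F := by
      rw [hFQ]
      push_cast
      ring
    rw [h5] at hden
    exact_mod_cast hden
end

section
/- Let k be a perfect field of characteristic p > 0, let m > 2, and let 1 < a ≤ b be fixed integers with (a, b) ≠ (2, 2). For an integer n ≥ b set f_n = x_1^a + x_2^b + x_3^n + x_4^n + … + x_m^n ∈ k[x_1, …, x_m]. If p ≡ 1 (mod lcm(a, b)), p^d ≤ n < p^{d+1} for some positive integer d, and fpt(f_n) ≠ 1/a + 1/b + (m−2)/n, then the power of p in the denominator of fpt(f_n), written in lowest terms, is at least d. -/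
open MvPolynomial Filter Finset

namespace UDen

/-! ### Geometric sums -/

/-- `gs p t = 1 + p + ⋯ + p^(t-1)`. -/
def gs (p t : ℕ) : ℕ := ∑ i ∈ Finset.range t, p ^ i

lemma gs_zero (p : ℕ) : gs p 0 = 0 := by simp [gs]

lemma gs_succ' (p t : ℕ) : gs p (t + 1) = gs p t + p ^ t := Finset.sum_range_succ _ _

lemma gs_succ (p t : ℕ) : gs p (t + 1) = p * gs p t + 1 := by
  rw [gs, Finset.sum_range_succ']
  simp only [pow_succ, pow_zero, ← Finset.sum_mul, gs]
  ring

lemma gs_mul {p : ℕ} (hp : 1 ≤ p) (t : ℕ) : (p - 1) * gs p t + 1 = p ^ t := by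
  induction t with
  | zero => simp [gs_zero]
  | succ t ih =>
    rw [gs_succ, pow_succ]
    zify [hp] at ih ⊢
    linear_combination p * ih

lemma gs_add (p u v : ℕ) : gs p (u + v) = gs p u + p ^ u * gs p v := by
  induction v with
  | zero => simp [gs_zero]
  | succ v ih =>
    rw [← add_assoc, gs_succ', ih, gs_succ', pow_add]
    ring

lemma gs_mono (p : ℕ) {u v : ℕ} (h : u ≤ v) : gs p u ≤ gs p v :=
  Finset.sum_le_sum_of_subset (Finset.range_subset_range.mpr h)

lemma gs_lt {p c : ℕ} (hp : 1 ≤ p) (hc : c ≤ p - 1) (t : ℕ) : c * gs p t < p ^ t := by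
  have h1 := gs_mul hp t
  have h2 : c * gs p t ≤ (p - 1) * gs p t := Nat.mul_le_mul_right _ hc
  omega

/-! ### Mod lemmas -/

lemma mod_split {p : ℕ} (hp : 1 ≤ p) {σ u h lo : ℕ} (hlo : lo < p ^ σ) :
    (p ^ σ * h + lo) % p ^ (σ + u) = p ^ σ * (h % p ^ u) + lo := by
  have hpu : 0 < p ^ u := Nat.pow_pos hp
  have hpσ : 0 < p ^ σ := Nat.pow_pos hp
  rw [pow_add, Nat.add_mod, Nat.mul_mod_mul_left, Nat.mod_eq_of_lt (lt_of_lt_of_le hlo (Nat.le_mul_of_pos_right _ hpu))]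
  have hm : h % p ^ u < p ^ u := Nat.mod_lt _ hpu
  have : p ^ σ * (h % p ^ u) + lo < p ^ σ * p ^ u := by
    calc p ^ σ * (h % p ^ u) + lo < p ^ σ * (h % p ^ u) + p ^ σ := by omega
    _ = p ^ σ * (h % p ^ u + 1) := by ring
    _ ≤ p ^ σ * p ^ u := Nat.mul_le_mul_left _ (by omega)
  rw [Nat.mod_eq_of_lt this]

lemma modg_eq {p c : ℕ} (hp : 1 ≤ p) (hc : c ≤ p - 1) {t E : ℕ} (h : t ≤ E) :
    (c * gs p E) % p ^ t = c * gs p t := by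
  obtain ⟨u, rfl⟩ : ∃ u, E = t + u := ⟨E - t, by omega⟩
  rw [gs_add]
  have h2 : c * (gs p t + p ^ t * gs p u) = c * gs p t + p ^ t * (c * gs p u) := by ring
  rw [h2, Nat.add_mul_mod_self_left]
  exact Nat.mod_eq_of_lt (gs_lt hp hc t)

lemma modg_le {p c : ℕ} (hp : 1 ≤ p) (hc : c ≤ p - 1) (t E : ℕ) :
    (c * gs p E) % p ^ t ≤ c * gs p t := by
  by_cases h : t ≤ E
  · exact (modg_eq hp hc h).le
  · exact le_trans (Nat.mod_le _ _) (Nat.mul_le_mul_left _ (gs_mono p (by omega)))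

/-! ### The quantities `D` and `ℓ` -/

/-- `DD p n j = ⌊(p^j - 1)/n⌋`. -/
def DD (p n j : ℕ) : ℕ := (p ^ j - 1) / n

/-- the `j`-th digit of the cap sequence -/
def ll (p n j : ℕ) : ℕ := DD p n j - p * DD p n (j - 1)

lemma DD_zero (p n : ℕ) : DD p n 0 = 0 := by simp [DD]

lemma DD_eq_zero {p n j : ℕ} (hn : 1 ≤ n) (h : p ^ j ≤ n) : DD p n j = 0 :=
  Nat.div_eq_of_lt (by omega)

lemma DD_mul_le (p : ℕ) {n : ℕ} (hn : 1 ≤ n) (j : ℕ) : n * DD p n j ≤ p ^ j - 1 := by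
  rw [mul_comm]; exact Nat.div_mul_le_self _ _

lemma pow_le_DD_succ {p : ℕ} (hp : 1 ≤ p) {n : ℕ} (hn : 1 ≤ n) (j : ℕ) :
    p ^ j ≤ n * (DD p n j + 1) := by
  have h1 : n * DD p n j + (p ^ j - 1) % n = p ^ j - 1 := Nat.div_add_mod _ _
  have h2 : (p ^ j - 1) % n < n := Nat.mod_lt _ hn
  have h3 : 0 < p ^ j := Nat.pow_pos hp
  rw [Nat.mul_add, mul_one]
  omega

lemma p_mul_DD_le {p : ℕ} (hp : 1 ≤ p) {n : ℕ} (hn : 1 ≤ n) (j : ℕ) :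
    p * DD p n j ≤ DD p n (j + 1) := by
  rw [DD, DD, Nat.le_div_iff_mul_le hn]
  have h := DD_mul_le p hn j
  have h3 : 0 < p ^ j := Nat.pow_pos hp
  calc p * ((p ^ j - 1) / n) * n = p * (((p ^ j - 1) / n) * n) := by ring
  _ ≤ p * (p ^ j - 1) := Nat.mul_le_mul_left _ (Nat.div_mul_le_self _ _)
  _ ≤ p ^ (j + 1) - 1 := by
      have h4 : 1 ≤ p ^ j := Nat.pow_pos hp
      have h5 : 1 ≤ p ^ (j + 1) := Nat.pow_pos hp
      have h6 : p ^ (j + 1) = p * p ^ j := by rw [pow_succ]; ring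
      zify [h4, h5]
      nlinarith [hp]

lemma DD_succ {p : ℕ} (hp : 1 ≤ p) {n : ℕ} (hn : 1 ≤ n) (j : ℕ) :
    DD p n (j + 1) = p * DD p n j + ll p n (j + 1) := by
  have h := p_mul_DD_le hp hn j
  rw [ll]; simp only [Nat.add_sub_cancel]
  omega

lemma ll_le {p : ℕ} (hp : 1 ≤ p) {n : ℕ} (hn : 1 ≤ n) (j : ℕ) :
    ll p n (j + 1) ≤ p - 1 := by
  have h1 : DD p n (j + 1) < p * DD p n j + p := by
    rw [DD, Nat.div_lt_iff_lt_mul hn]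
    have h2 := pow_le_DD_succ hp hn j
    have h3 : 0 < p ^ (j + 1) := Nat.pow_pos hp
    calc p ^ (j + 1) - 1 < p ^ (j + 1) := by omega
    _ = p * p ^ j := by rw [pow_succ]; ring
    _ ≤ p * (n * (DD p n j + 1)) := Nat.mul_le_mul_left _ h2
    _ = (p * DD p n j + p) * n := by ring
  have h2 := p_mul_DD_le hp hn j
  have h4 := DD_succ hp hn j
  omega

lemma DD_div_pow {p : ℕ} (hp : 1 ≤ p) {n : ℕ} (hn : 1 ≤ n) (s σ : ℕ) :
    DD p n (s + σ) / p ^ σ = DD p n s := by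
  rw [DD, Nat.div_div_eq_div_mul]
  have hpσ : 0 < p ^ σ := Nat.pow_pos hp
  have hps : 0 < p ^ s := Nat.pow_pos hp
  apply Nat.div_eq_of_lt_le
  · calc DD p n s * (n * p ^ σ) = (n * DD p n s) * p ^ σ := by ring
    _ ≤ (p ^ s - 1) * p ^ σ := Nat.mul_le_mul_right _ (DD_mul_le p hn s)
    _ ≤ p ^ (s + σ) - 1 := by
        have h4 : 1 ≤ p ^ s := Nat.pow_pos hp
        have h5 : 1 ≤ p ^ (s + σ) := Nat.pow_pos hp
        have h6 : p ^ (s + σ) = p ^ s * p ^ σ := pow_add p s σ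
        zify [h4, h5]
        nlinarith [hpσ]
  · calc p ^ (s + σ) - 1 < p ^ (s + σ) := by have : 0 < p ^ (s+σ) := Nat.pow_pos hp; omega
    _ = p ^ s * p ^ σ := pow_add p s σ
    _ ≤ (n * (DD p n s + 1)) * p ^ σ := Nat.mul_le_mul_right _ (pow_le_DD_succ hp hn s)
    _ = (DD p n s + 1) * (n * p ^ σ) := by ring

/-- digit bound: if all digits of the caps up to `J` satisfy `M⋅ℓ_j ≤ r`, then
`M ⋅ (D_j mod p^u) ≤ r ⋅ gs u`. -/
lemma digit_bound {p : ℕ} (hp : 1 ≤ p) {n : ℕ} (hn : 1 ≤ n) {M r J : ℕ}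
    (h : ∀ j, j ≤ J → M * ll p n j ≤ r) :
    ∀ u j, j ≤ J → M * (DD p n j % p ^ u) ≤ r * gs p u := by
  intro u
  induction u with
  | zero => intro j _; simp [pow_zero, Nat.mod_one, gs_zero]
  | succ u ih =>
    intro j hj
    match j with
    | 0 => simp [DD_zero]
    | j + 1 =>
      have hll : ll p n (j + 1) < p ^ 1 := by
        have := ll_le hp hn (n := n) j; simp only [pow_one]; omega
      have hrec : DD p n (j + 1) % p ^ (u + 1) = p * (DD p n j % p ^ u) + ll p n (j + 1) := by
        have h1 := DD_succ hp hn (n := n) j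
        have h2 : (p ^ 1 * DD p n j + ll p n (j+1)) % p ^ (1 + u)
            = p ^ 1 * (DD p n j % p ^ u) + ll p n (j + 1) := mod_split hp hll
        rw [h1]
        simpa [pow_one, add_comm] using h2
      rw [hrec]
      have hih := ih j (by omega)
      have hj1 := h (j + 1) hj
      calc M * (p * (DD p n j % p ^ u) + ll p n (j + 1))
          = p * (M * (DD p n j % p ^ u)) + M * ll p n (j + 1) := by ring
      _ ≤ p * (r * gs p u) + r := by
          exact Nat.add_le_add (Nat.mul_le_mul_left _ hih) hj1
      _ = r * (p * gs p u + 1) := by ring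
      _ = r * gs p (u + 1) := by rw [gs_succ]





/-! ### Carries and multinomial coefficients (Kummer) -/

lemma sum_mod_of_not_dvd {p : ℕ} (hp : p.Prime) {ι : Type*} {s : Finset ι} {k : ι → ℕ}
    (h : ¬ p ∣ Nat.multinomial s k) (t : ℕ) :
    ∑ i ∈ s, k i % p ^ t = (∑ i ∈ s, k i) % p ^ t := by
  classical
  haveI : Fact p.Prime := ⟨hp⟩
  induction s using Finset.cons_induction with
  | empty => simp
  | cons a s ha ih =>
    rw [Nat.multinomial_cons, hp.dvd_mul] at h
    push_neg at h
    have ih' := ih h.2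
    rcases Nat.eq_zero_or_pos t with rfl | ht
    · simp [Nat.mod_one]
    · set S := ∑ i ∈ s, k i with hS
      have hcarry : k a % p ^ t + S % p ^ t < p ^ t := by
        by_cases hlog : t ≤ Nat.log p (k a + S)
        · have h0 : padicValNat p ((k a + S).choose (k a)) = 0 :=
            padicValNat.eq_zero_of_not_dvd h.1
          have hswap : k a + S = S + k a := by ring
          rw [hswap] at h0
          rw [padicValNat_choose' (b := Nat.log p (S + k a) + 1) (Nat.lt_succ_self _)] at h0
          have hfil := Finset.card_eq_zero.mp h0
          by_contra hcon
          push_neg at hcon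
          have hmem : t ∈ (Finset.Ico 1 (Nat.log p (S + k a) + 1)).filter
              (fun i => p ^ i ≤ k a % p ^ i + S % p ^ i) := by
            rw [Finset.mem_filter, Finset.mem_Ico]
            refine ⟨⟨ht, ?_⟩, hcon⟩
            rw [hswap] at hlog; omega
          rw [hfil] at hmem
          exact absurd hmem (Finset.notMem_empty t)
        · push_neg at hlog
          rcases Nat.eq_zero_or_pos (k a + S) with hz | hpos
          · have h1 : k a = 0 := by omega
            have h2 : S = 0 := by omega
            simp [h1, h2, Nat.pow_pos (n := t) hp.pos]
          · have hlt : k a + S < p ^ t := by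
              have := Nat.lt_pow_succ_log_self hp.one_lt (k a + S)
              calc k a + S < p ^ (Nat.log p (k a + S) + 1) := this
              _ ≤ p ^ t := Nat.pow_le_pow_right hp.pos (by omega)
            rw [Nat.mod_eq_of_lt (by omega), Nat.mod_eq_of_lt (by omega)]
            omega
      rw [Finset.sum_cons, Finset.sum_cons, ih', ← hS, Nat.add_mod,
        Nat.mod_eq_of_lt hcarry]

lemma not_dvd_of_carry_free {p : ℕ} (hp : p.Prime) {ι : Type*} {s : Finset ι} {k : ι → ℕ}
    (h : ∀ t, 1 ≤ t → ∑ i ∈ s, k i % p ^ t < p ^ t) :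
    ¬ p ∣ Nat.multinomial s k := by
  classical
  haveI : Fact p.Prime := ⟨hp⟩
  induction s using Finset.cons_induction with
  | empty =>
    simp only [Nat.multinomial_empty]
    exact fun hd => hp.one_lt.ne' (Nat.dvd_one.mp hd)
  | cons a s ha ih =>
    rw [Nat.multinomial_cons, hp.dvd_mul]
    push_neg
    constructor
    · set S := ∑ i ∈ s, k i with hS
      have hswap : k a + S = S + k a := by ring
      intro hdvd
      have hne : (k a + S).choose (k a) ≠ 0 :=
        Nat.choose_pos (by omega) |>.ne'
      have h0 : padicValNat p ((k a + S).choose (k a)) ≠ 0 := by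
        intro h0
        rw [padicValNat.eq_zero_iff] at h0
        rcases h0 with h1 | h1 | h1
        · exact hp.one_lt.ne' h1
        · exact hne h1
        · exact h1 hdvd
      rw [hswap, padicValNat_choose' (b := Nat.log p (S + k a) + 1) (Nat.lt_succ_self _)] at h0
      have : ((Finset.Ico 1 (Nat.log p (S + k a) + 1)).filter
          (fun i => p ^ i ≤ k a % p ^ i + S % p ^ i)).Nonempty := by
        rw [Finset.nonempty_iff_ne_empty]
        intro hemp
        rw [hemp] at h0
        simp at h0
      obtain ⟨i, hi⟩ := this
      rw [Finset.mem_filter, Finset.mem_Ico] at hi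
      have hSmod : S % p ^ i ≤ ∑ j ∈ s, k j % p ^ i := by
        rw [hS, Finset.sum_nat_mod]
        exact Nat.mod_le _ _
      have htot := h i hi.1.1
      rw [Finset.sum_cons] at htot
      have hka : p ^ i ≤ k a % p ^ i + S % p ^ i := hi.2
      exact absurd htot (not_lt.mpr (le_trans hka (Nat.add_le_add_left hSmod _)))
    · apply ih
      intro t ht
      have htot := h t ht
      rw [Finset.sum_cons] at htot
      exact lt_of_le_of_lt (Nat.le_add_left _ _) htot




variable {𝕜 : Type*} [Field 𝕜] {p : ℕ} [CharP 𝕜 p] {m : ℕ}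

/-- feasibility predicate: `N` is a sum `∑ kᵢ` with `wᵢ kᵢ < q` and multinomial
coefficient not divisible by `p`. -/
def Feas (p : ℕ) {m : ℕ} (w : Fin m → ℕ) (q N : ℕ) : Prop :=
  ∃ k : Fin m → ℕ, (∑ i, k i = N) ∧ (∀ i, w i * k i < q) ∧ ¬ p ∣ Nat.multinomial Finset.univ k

lemma prod_X_pow_eq (c : Fin m → ℕ) :
    (∏ i, (X i : MvPolynomial (Fin m) 𝕜) ^ c i) =
      monomial (Finsupp.equivFunOnFinite.symm c) 1 := by
  classical
  rw [← MvPolynomial.prod_X_pow_eq_monomial]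
  symm
  apply Finset.prod_subset (Finset.subset_univ _)
  intro x _ hx
  have : Finsupp.equivFunOnFinite.symm c x = 0 := by
    simpa [Finsupp.mem_support_iff] using hx
  simp [this]

lemma f_pow_expand (w : Fin m → ℕ) (N : ℕ) :
    ((∑ i, X i ^ w i : MvPolynomial (Fin m) 𝕜)) ^ N =
      ∑ k ∈ piAntidiag univ N,
        (Nat.multinomial Finset.univ k : MvPolynomial (Fin m) 𝕜) *
          ∏ i, X i ^ (w i * k i) := by
  rw [Finset.sum_pow_eq_sum_piAntidiag]
  exact Finset.sum_congr rfl fun k _ => by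
    congr 1
    exact Finset.prod_congr rfl fun i _ => by rw [pow_mul]

lemma coeff_eq_zero_of_mem {q : ℕ} {h : MvPolynomial (Fin m) 𝕜}
    (hmem : h ∈ frobeniusPower 𝕜 m q) (μ : Fin m →₀ ℕ) (hμ : ∀ i, μ i < q) :
    coeff μ h = 0 := by
  rw [frobeniusPower] at hmem
  obtain ⟨c, hc⟩ := (Ideal.mem_span_range_iff_exists_fun).mp hmem
  rw [← hc, MvPolynomial.coeff_sum]
  apply Finset.sum_eq_zero
  intro i _
  rw [X_pow_eq_monomial, coeff_mul_monomial']
  rw [if_neg]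
  intro hle
  exact absurd (by simpa using hle i) (not_le.mpr (hμ i))

lemma pow_mem_of_not_feas {w : Fin m → ℕ} {q N : ℕ} (hp : p.Prime)
    (hnf : ¬ Feas p w q N) :
    ((∑ i, X i ^ w i : MvPolynomial (Fin m) 𝕜)) ^ N ∈ frobeniusPower 𝕜 m q := by
  rw [f_pow_expand]
  apply Ideal.sum_mem
  intro k hk
  rw [Finset.mem_piAntidiag] at hk
  by_cases hcap : ∀ i, w i * k i < q
  · have hdvd : p ∣ Nat.multinomial Finset.univ k := by
      by_contra hnd
      exact hnf ⟨k, hk.1, hcap, hnd⟩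
    have hz : ((Nat.multinomial Finset.univ k : ℕ) : MvPolynomial (Fin m) 𝕜) = 0 :=
      (CharP.cast_eq_zero_iff _ p _).mpr hdvd
    rw [hz, zero_mul]
    exact Ideal.zero_mem _
  · push_neg at hcap
    obtain ⟨i0, hi0⟩ := hcap
    have hdvd : (X i0 : MvPolynomial (Fin m) 𝕜) ^ q ∣ ∏ i, X i ^ (w i * k i) :=
      dvd_trans (pow_dvd_pow _ hi0) (Finset.dvd_prod_of_mem _ (Finset.mem_univ i0))
    obtain ⟨c, hc⟩ := hdvd
    rw [hc]
    have hXq : (X i0 : MvPolynomial (Fin m) 𝕜) ^ q ∈ frobeniusPower 𝕜 m q :=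
      Ideal.subset_span ⟨i0, rfl⟩
    exact Ideal.mul_mem_left _ _ (Ideal.mul_mem_right _ _ hXq)

lemma pow_not_mem_of_feas {w : Fin m → ℕ} {q N : ℕ} (hp : p.Prime)
    (hw : ∀ i, 1 ≤ w i) (hf : Feas p w q N) :
    ((∑ i, X i ^ w i : MvPolynomial (Fin m) 𝕜)) ^ N ∉ frobeniusPower 𝕜 m q := by
  obtain ⟨k, hsum, hcap, hnd⟩ := hf
  intro hmem
  have hco := coeff_eq_zero_of_mem hmem
    (Finsupp.equivFunOnFinite.symm fun i => w i * k i)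
    (fun i => by simpa using hcap i)
  have hcoeff : coeff (Finsupp.equivFunOnFinite.symm fun i => w i * k i)
      (((∑ i, X i ^ w i : MvPolynomial (Fin m) 𝕜)) ^ N) =
      ((Nat.multinomial Finset.univ k : ℕ) : 𝕜) := by
    rw [f_pow_expand, MvPolynomial.coeff_sum]
    rw [Finset.sum_eq_single k]
    · rw [prod_X_pow_eq, ← map_natCast (C : 𝕜 →+* MvPolynomial (Fin m) 𝕜),
        coeff_C_mul, coeff_monomial, if_pos rfl, mul_one]
    · intro k' hk' hne
      rw [prod_X_pow_eq, ← map_natCast (C : 𝕜 →+* MvPolynomial (Fin m) 𝕜),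
        coeff_C_mul, coeff_monomial, if_neg, mul_zero]
      intro heq
      apply hne
      have heq' : (fun i => w i * k' i) = (fun i => w i * k i) :=
        Finsupp.equivFunOnFinite.symm.injective heq
      funext i
      have := congrFun heq' i
      exact Nat.eq_of_mul_eq_mul_left (hw i) this
    · intro hk
      exact absurd (Finset.mem_piAntidiag.mpr ⟨hsum, fun i _ => Finset.mem_univ i⟩) hk
  rw [hcoeff] at hco
  exact hnd ((CharP.cast_eq_zero_iff _ p _).mp hco)

lemma nu_eq_of {w : Fin m → ℕ} {q V : ℕ} (hp : p.Prime) (hw : ∀ i, 1 ≤ w i)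
    (hub : ∀ N, Feas p w q N → N ≤ V) (hV : Feas p w q V) :
    nu (∑ i, X i ^ w i : MvPolynomial (Fin m) 𝕜) q = V := by
  have hset : {N | ((∑ i, X i ^ w i : MvPolynomial (Fin m) 𝕜)) ^ N ∉ frobeniusPower 𝕜 m q}
      = {N | Feas p w q N} := by
    ext N
    simp only [Set.mem_setOf_eq]
    constructor
    · intro hnm
      by_contra hnf
      exact hnm (pow_mem_of_not_feas hp hnf)
    · intro hf
      exact pow_not_mem_of_feas hp hw hf
  rw [nu, hset]
  apply le_antisymm
  · exact csSup_le ⟨V, hV⟩ hub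
  · exact le_csSup ⟨V, fun N hN => hub N hN⟩ hV


/-! ### Evaluation of sums over `Fin m` -/

lemma sum_ite_eval {m : ℕ} (hm : 2 ≤ m) (A B C : ℕ) :
    ∑ i : Fin m, (if (i : ℕ) = 0 then A else if (i : ℕ) = 1 then B else C)
      = A + B + (m - 2) * C := by
  rw [Fin.sum_univ_eq_sum_range (fun j => if j = 0 then A else if j = 1 then B else C) m]
  rw [Finset.range_eq_Ico, ← Finset.sum_Ico_consecutive _ (by omega : (0:ℕ) ≤ 2) (by omega : 2 ≤ m)]
  have h1 : ∑ j ∈ Finset.Ico 0 2, (if j = 0 then A else if j = 1 then B else C) = A + B := by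
    rw [← Finset.range_eq_Ico, Finset.sum_range_succ, Finset.sum_range_one]
    norm_num
  have h2 : ∑ j ∈ Finset.Ico 2 m, (if j = 0 then A else if j = 1 then B else C)
      = (m - 2) * C := by
    rw [Finset.sum_congr rfl (fun j hj => ?_), Finset.sum_const, Nat.card_Ico, smul_eq_mul]
    rw [Finset.mem_Ico] at hj
    rw [if_neg (by omega), if_neg (by omega)]
  rw [h1, h2]

lemma sum_ite_eval4 {m x : ℕ} (h : 3 + x ≤ m) (A B C T P : ℕ) :
    ∑ i : Fin m, (if (i : ℕ) = 0 then A else if (i : ℕ) = 1 then B else if (i : ℕ) = 2 then C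
      else if (i : ℕ) < 3 + x then T else P) = A + B + C + x * T + (m - (3 + x)) * P := by
  rw [Fin.sum_univ_eq_sum_range
    (fun j => if j = 0 then A else if j = 1 then B else if j = 2 then C
      else if j < 3 + x then T else P) m]
  rw [Finset.range_eq_Ico, ← Finset.sum_Ico_consecutive _ (by omega : (0:ℕ) ≤ 3) (by omega : 3 ≤ m),
    ← Finset.sum_Ico_consecutive _ (by omega : (3:ℕ) ≤ 3 + x) (by omega : 3 + x ≤ m)]
  have h1 : ∑ j ∈ Finset.Ico 0 3, (if j = 0 then A else if j = 1 then B else if j = 2 then C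
      else if j < 3 + x then T else P) = A + B + C := by
    rw [← Finset.range_eq_Ico, Finset.sum_range_succ, Finset.sum_range_succ,
      Finset.sum_range_one]
    norm_num
  have h2 : ∑ j ∈ Finset.Ico 3 (3 + x), (if j = 0 then A else if j = 1 then B else if j = 2 then C
      else if j < 3 + x then T else P) = x * T := by
    rw [Finset.sum_congr rfl (fun j hj => ?_), Finset.sum_const, Nat.card_Ico, smul_eq_mul]
    · congr 1; omega
    rw [Finset.mem_Ico] at hj
    rw [if_neg (by omega), if_neg (by omega), if_neg (by omega), if_pos (by omega)]
  have h3 : ∑ j ∈ Finset.Ico (3 + x) m, (if j = 0 then A else if j = 1 then B else if j = 2 then C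
      else if j < 3 + x then T else P) = (m - (3 + x)) * P := by
    rw [Finset.sum_congr rfl (fun j hj => ?_), Finset.sum_const, Nat.card_Ico, smul_eq_mul]
    rw [Finset.mem_Ico] at hj
    rw [if_neg (by omega), if_neg (by omega), if_neg (by omega), if_neg (by omega)]
  rw [h1, h2, h3]
  ring

/-! ### The combinatorial optimization: upper bound -/

section Main

variable {p a b n m ca cb r : ℕ}

/-- exponent vector of the diagonal polynomial -/
def wfun (a b n m : ℕ) : Fin m → ℕ := fun i =>
  if (i : ℕ) = 0 then a else if (i : ℕ) = 1 then b else n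

lemma budget_eq (hp1 : 1 ≤ p) (hr : ca + cb + r + 1 = p) (t : ℕ) :
    ca * gs p t + cb * gs p t + r * gs p t + 1 = p ^ t := by
  have h5 := gs_mul hp1 t
  have h7 : ca + cb + r = p - 1 := by omega
  have h6 : ca * gs p t + cb * gs p t + r * gs p t = (p - 1) * gs p t := by
    rw [← h7]; ring
  omega

lemma upper_bound (hp1 : 1 ≤ p) (hca : a * ca = p - 1) (hcb : b * cb = p - 1)
    (ha : 1 ≤ a) (hb : 1 ≤ b) (hn : 1 ≤ n) (hm : 3 ≤ m) {e s : ℕ} (hes : s ≤ e)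
    (k : Fin m → ℕ) (hcap : ∀ i, wfun a b n m i * k i < p ^ e)
    (hcar : ∑ i, k i % p ^ (e - s) < p ^ (e - s)) :
    (∑ i, k i) + 1 ≤ p ^ (e - s) * (ca * gs p s + cb * gs p s + (m - 2) * DD p n s + 1) := by
  set σ := e - s with hσ
  have heσ : e = σ + s := by omega
  have hgse : gs p e = gs p σ + p ^ σ * gs p s := by rw [heσ, gs_add]
  have hpσ : 0 < p ^ σ := Nat.pow_pos hp1
  have hcaP : ca ≤ p - 1 := by
    have h1 : 1 * ca ≤ a * ca := Nat.mul_le_mul_right _ ha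
    omega
  have hcbP : cb ≤ p - 1 := by
    have h1 : 1 * cb ≤ b * cb := Nat.mul_le_mul_right _ hb
    omega
  have hhi : ∀ i : Fin m, k i / p ^ σ ≤
      (if (i : ℕ) = 0 then ca * gs p s else if (i : ℕ) = 1 then cb * gs p s else DD p n s) := by
    intro i
    have hgsdiv : ∀ c : ℕ, c ≤ p - 1 → (c * gs p e) / p ^ σ = c * gs p s := by
      intro c hc
      have h2 : c * gs p e = c * gs p σ + p ^ σ * (c * gs p s) := by rw [hgse]; ring
      rw [h2, Nat.add_mul_div_left _ _ hpσ, Nat.div_eq_of_lt (gs_lt hp1 hc σ), zero_add]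
    by_cases h0 : (i : ℕ) = 0
    · rw [if_pos h0]
      have hwi : wfun a b n m i = a := by simp [wfun, h0]
      have h1 := hcap i; rw [hwi] at h1
      have h2 := gs_mul hp1 e
      have hki : k i ≤ ca * gs p e := by
        have h3 : a * k i ≤ (p - 1) * gs p e := by omega
        rw [← hca, mul_assoc] at h3
        exact Nat.le_of_mul_le_mul_left h3 (by omega)
      calc k i / p ^ σ ≤ (ca * gs p e) / p ^ σ := Nat.div_le_div_right hki
      _ = ca * gs p s := hgsdiv ca hcaP
    · rw [if_neg h0]
      by_cases h1 : (i : ℕ) = 1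
      · rw [if_pos h1]
        have hwi : wfun a b n m i = b := by simp [wfun, h0, h1]
        have hc1 := hcap i; rw [hwi] at hc1
        have h2 := gs_mul hp1 e
        have hki : k i ≤ cb * gs p e := by
          have h3 : b * k i ≤ (p - 1) * gs p e := by omega
          rw [← hcb, mul_assoc] at h3
          exact Nat.le_of_mul_le_mul_left h3 (by omega)
        calc k i / p ^ σ ≤ (cb * gs p e) / p ^ σ := Nat.div_le_div_right hki
        _ = cb * gs p s := hgsdiv cb hcbP
      · rw [if_neg h1]
        have hwi : wfun a b n m i = n := by simp [wfun, h0, h1]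
        have hc1 := hcap i; rw [hwi] at hc1
        have hki : k i ≤ DD p n e := by
          rw [DD, Nat.le_div_iff_mul_le hn, mul_comm]
          have h3 : 0 < p ^ e := Nat.pow_pos hp1
          omega
        calc k i / p ^ σ ≤ DD p n e / p ^ σ := Nat.div_le_div_right hki
        _ = DD p n s := by rw [heσ, add_comm σ s]; exact DD_div_pow hp1 hn s σ
  have hdecomp : ∑ i, k i = p ^ σ * (∑ i, k i / p ^ σ) + ∑ i, k i % p ^ σ := by
    rw [Finset.mul_sum, ← Finset.sum_add_distrib]
    exact Finset.sum_congr rfl fun i _ => (Nat.div_add_mod _ _).symm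
  have hhisum : (∑ i, k i / p ^ σ) ≤ ca * gs p s + cb * gs p s + (m - 2) * DD p n s := by
    calc (∑ i, k i / p ^ σ)
        ≤ ∑ i : Fin m, (if (i : ℕ) = 0 then ca * gs p s else if (i : ℕ) = 1 then cb * gs p s
            else DD p n s) := Finset.sum_le_sum (fun i _ => hhi i)
    _ = _ := sum_ite_eval (by omega) _ _ _
  calc (∑ i, k i) + 1 = p ^ σ * (∑ i, k i / p ^ σ) + ((∑ i, k i % p ^ σ) + 1) := by
        rw [hdecomp]; ring
  _ ≤ p ^ σ * (ca * gs p s + cb * gs p s + (m - 2) * DD p n s) + p ^ σ :=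
        Nat.add_le_add (Nat.mul_le_mul_left _ hhisum) (by omega)
  _ = p ^ σ * (ca * gs p s + cb * gs p s + (m - 2) * DD p n s + 1) := by ring

/-! ### Witness constructions -/

lemma feas_A (hp : p.Prime) (hca : a * ca = p - 1) (hcb : b * cb = p - 1)
    (hr : ca + cb + r + 1 = p) (ha : 1 ≤ a) (hb : 1 ≤ b) (hn : 1 ≤ n) (hm : 3 ≤ m)
    (hA : ∀ j, (m - 2) * ll p n j ≤ r) (e : ℕ) :
    Feas p (wfun a b n m) (p ^ e)
      (ca * gs p e + cb * gs p e + (m - 2) * DD p n e) := by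
  have hp1 : 1 ≤ p := hp.pos
  have hpe : 0 < p ^ e := Nat.pow_pos hp1
  have hcaP : ca ≤ p - 1 := by
    have h1 : 1 * ca ≤ a * ca := Nat.mul_le_mul_right _ ha; omega
  have hcbP : cb ≤ p - 1 := by
    have h1 : 1 * cb ≤ b * cb := Nat.mul_le_mul_right _ hb; omega
  have hrP : r ≤ p - 1 := by have := hp.two_le; omega
  refine ⟨fun i => if (i : ℕ) = 0 then ca * gs p e else if (i : ℕ) = 1 then cb * gs p e
    else DD p n e, sum_ite_eval (by omega) _ _ _, ?_, ?_⟩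
  · intro i
    beta_reduce
    by_cases h0 : (i : ℕ) = 0
    · have hwi : wfun a b n m i = a := by simp [wfun, h0]
      rw [hwi, if_pos h0, ← mul_assoc, hca]
      have := gs_mul hp1 e
      omega
    · by_cases h1 : (i : ℕ) = 1
      · have hwi : wfun a b n m i = b := by simp [wfun, h0, h1]
        rw [hwi, if_neg h0, if_pos h1, ← mul_assoc, hcb]
        have := gs_mul hp1 e
        omega
      · have hwi : wfun a b n m i = n := by simp [wfun, h0, h1]
        rw [hwi, if_neg h0, if_neg h1]
        have := DD_mul_le p hn e
        omega
  · apply not_dvd_of_carry_free hp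
    intro t ht
    have hpt : ∀ i : Fin m,
        (if (i : ℕ) = 0 then ca * gs p e else if (i : ℕ) = 1 then cb * gs p e
          else DD p n e) % p ^ t
        = (if (i : ℕ) = 0 then (ca * gs p e) % p ^ t else if (i : ℕ) = 1 then
            (cb * gs p e) % p ^ t else DD p n e % p ^ t) := by
      intro i; split_ifs <;> rfl
    beta_reduce
    calc ∑ i : Fin m, (if (i : ℕ) = 0 then ca * gs p e else if (i : ℕ) = 1 then cb * gs p e
          else DD p n e) % p ^ t
        = ∑ i : Fin m, (if (i : ℕ) = 0 then (ca * gs p e) % p ^ t else if (i : ℕ) = 1 then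
            (cb * gs p e) % p ^ t else DD p n e % p ^ t) :=
          Finset.sum_congr rfl (fun i _ => hpt i)
    _ = (ca * gs p e) % p ^ t + (cb * gs p e) % p ^ t + (m - 2) * (DD p n e % p ^ t) :=
          sum_ite_eval (by omega) _ _ _
    _ < p ^ t := by
        have h1 := modg_le hp1 hcaP t e
        have h2 := modg_le hp1 hcbP t e
        have h3 := digit_bound hp1 hn (fun j (_ : j ≤ e) => hA j) t e le_rfl
        have h4 := budget_eq hp1 hr t
        omega

lemma feas_B (hp : p.Prime) (hca : a * ca = p - 1) (hcb : b * cb = p - 1)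
    (hr : ca + cb + r + 1 = p) (ha : 1 ≤ a) (hb : 1 ≤ b) (hn : 1 ≤ n) (hm : 3 ≤ m) {s : ℕ}
    (hS : ∀ j, j ≤ s → (m - 2) * ll p n j ≤ r)
    (hB : r < (m - 2) * ll p n (s + 1)) (E : ℕ) :
    ∃ S, S + 1 = p ^ (E + 1) * (ca * gs p s + cb * gs p s + (m - 2) * DD p n s + 1) ∧
      Feas p (wfun a b n m) (p ^ (s + 1 + E)) S := by
  have hp1 : 1 ≤ p := hp.pos
  have hcaP : ca ≤ p - 1 := by
    have h1 : 1 * ca ≤ a * ca := Nat.mul_le_mul_right _ ha; omega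
  have hcbP : cb ≤ p - 1 := by
    have h1 : 1 * cb ≤ b * cb := Nat.mul_le_mul_right _ hb; omega
  have hrP : r ≤ p - 1 := by have := hp.two_le; omega
  set ℓ₁ := ll p n (s + 1) with hℓ
  have hl1 : 1 ≤ ℓ₁ := by
    rcases Nat.eq_zero_or_pos ℓ₁ with h | h
    · rw [h, Nat.mul_zero] at hB; omega
    · exact h
  have hlp : ℓ₁ ≤ p - 1 := ll_le hp1 hn s
  set x := r / ℓ₁ with hxdef
  set y := r % ℓ₁ with hydef
  have hxy : ℓ₁ * x + y = r := Nat.div_add_mod r ℓ₁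
  have hy : y < ℓ₁ := Nat.mod_lt _ (by omega)
  have hx : x < m - 2 := by
    rw [hxdef, Nat.div_lt_iff_lt_mul (by omega : 0 < ℓ₁)]
    calc r < (m - 2) * ℓ₁ := hB
    _ = (m - 2) * ℓ₁ := rfl
  have hx3 : 3 + x ≤ m := by omega
  obtain ⟨z, hz⟩ : ∃ z, m = 3 + x + z := ⟨m - (3 + x), by omega⟩
  have hm2 : m - 2 = x + z + 1 := by omega
  have hz2 : m - (3 + x) = z := by omega
  have hDs1 : DD p n (s + 1) = p * DD p n s + ℓ₁ := DD_succ hp1 hn s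
  have hgse : gs p (s + 1 + E) = gs p (E + 1) + p ^ (E + 1) * gs p s := by
    rw [show s + 1 + E = (E + 1) + s by omega, gs_add]
  have hkey : ca * gs p (E + 1) + cb * gs p (E + 1) + y * p ^ E + x * ℓ₁ * p ^ E
      + r * gs p E + 1 = p ^ (E + 1) := by
    calc ca * gs p (E + 1) + cb * gs p (E + 1) + y * p ^ E + x * ℓ₁ * p ^ E
          + r * gs p E + 1
        = ca * gs p (E + 1) + cb * gs p (E + 1) + (ℓ₁ * x + y) * p ^ E + r * gs p E + 1 := by
          ring
    _ = ca * gs p (E + 1) + cb * gs p (E + 1) + r * p ^ E + r * gs p E + 1 := by rw [hxy]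
    _ = ca * gs p (E + 1) + cb * gs p (E + 1) + r * (gs p E + p ^ E) + 1 := by ring
    _ = ca * gs p (E + 1) + cb * gs p (E + 1) + r * gs p (E + 1) + 1 := by rw [← gs_succ']
    _ = p ^ (E + 1) := budget_eq hp1 hr (E + 1)
  set P0 := DD p n s * p ^ (E + 1) with hP0
  set T0 := DD p n (s + 1) * p ^ E with hT0
  set C0 := P0 + y * p ^ E + r * gs p E with hC0
  set A0 := ca * gs p (s + 1 + E) with hA0
  set B0 := cb * gs p (s + 1 + E) with hB0
  refine ⟨A0 + B0 + C0 + x * T0 + (m - (3 + x)) * P0, ?_,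
    ⟨fun i => if (i : ℕ) = 0 then A0 else if (i : ℕ) = 1 then B0 else if (i : ℕ) = 2 then C0
      else if (i : ℕ) < 3 + x then T0 else P0, sum_ite_eval4 hx3 _ _ _ _ _, ?_, ?_⟩⟩
  · -- value identity
    rw [hz2, hm2, hA0, hB0, hC0, hT0, hP0, hgse, hDs1]
    have hps : p ^ (E + 1) = p ^ E * p := pow_succ p E
    rw [hps] at hkey ⊢
    zify at hkey ⊢
    linear_combination hkey
  · -- caps
    have hrg : r * gs p E + 1 ≤ p ^ E := by
      have h1 := gs_mul hp1 E
      have h2 : r * gs p E ≤ (p - 1) * gs p E := Nat.mul_le_mul_right _ hrP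
      omega
    have hC1 : C0 + 1 ≤ DD p n (s + 1) * p ^ E := by
      have h3 : (y + 1) * p ^ E ≤ ℓ₁ * p ^ E := Nat.mul_le_mul_right _ (by omega)
      have h4 : (y + 1) * p ^ E = y * p ^ E + p ^ E := by ring
      have h5 : DD p n (s + 1) * p ^ E = DD p n s * p ^ (E + 1) + ℓ₁ * p ^ E := by
        rw [hDs1, pow_succ]; ring
      rw [hC0, hP0, h5]
      omega
    have hsub : ∀ w u : ℕ, (p ^ w - 1) * p ^ u + p ^ u = p ^ (w + u) := by
      intro w u
      have h6 : 1 ≤ p ^ w := Nat.pow_pos hp1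
      calc (p ^ w - 1) * p ^ u + p ^ u = ((p ^ w - 1) + 1) * p ^ u := by ring
      _ = p ^ w * p ^ u := by rw [Nat.sub_add_cancel h6]
      _ = p ^ (w + u) := (pow_add p w u).symm
    have hTb : n * (DD p n (s + 1) * p ^ E) ≤ (p ^ (s + 1) - 1) * p ^ E := by
      calc n * (DD p n (s + 1) * p ^ E) = (n * DD p n (s + 1)) * p ^ E := by ring
      _ ≤ (p ^ (s + 1) - 1) * p ^ E := Nat.mul_le_mul_right _ (DD_mul_le p hn (s + 1))
    have hTb2 := hsub (s + 1) E
    have hPb : n * (DD p n s * p ^ (E + 1)) ≤ (p ^ s - 1) * p ^ (E + 1) := by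
      calc n * (DD p n s * p ^ (E + 1)) = (n * DD p n s) * p ^ (E + 1) := by ring
      _ ≤ (p ^ s - 1) * p ^ (E + 1) := Nat.mul_le_mul_right _ (DD_mul_le p hn s)
    have hPb2 : (p ^ s - 1) * p ^ (E + 1) + p ^ (E + 1) = p ^ (s + 1 + E) := by
      rw [hsub s (E + 1)]; congr 1; omega
    have hpE : 0 < p ^ E := Nat.pow_pos hp1
    have hpE1 : 0 < p ^ (E + 1) := Nat.pow_pos hp1
    intro i
    beta_reduce
    by_cases h0 : (i : ℕ) = 0
    · have hwi : wfun a b n m i = a := by simp [wfun, h0]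
      rw [hwi, if_pos h0, hA0, ← mul_assoc, hca]
      have := gs_mul hp1 (s + 1 + E)
      have hq : 0 < p ^ (s + 1 + E) := Nat.pow_pos hp1
      omega
    · by_cases h1 : (i : ℕ) = 1
      · have hwi : wfun a b n m i = b := by simp [wfun, h0, h1]
        rw [hwi, if_neg h0, if_pos h1, hB0, ← mul_assoc, hcb]
        have := gs_mul hp1 (s + 1 + E)
        have hq : 0 < p ^ (s + 1 + E) := Nat.pow_pos hp1
        omega
      · have hwi : wfun a b n m i = n := by simp [wfun, h0, h1]
        rw [hwi, if_neg h0, if_neg h1]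
        by_cases h2 : (i : ℕ) = 2
        · rw [if_pos h2]
          have h7 : n * C0 + n ≤ n * (DD p n (s + 1) * p ^ E) := by
            calc n * C0 + n = n * (C0 + 1) := by ring
            _ ≤ n * (DD p n (s + 1) * p ^ E) := Nat.mul_le_mul_left _ hC1
          omega
        · rw [if_neg h2]
          by_cases h3 : (i : ℕ) < 3 + x
          · rw [if_pos h3, hT0]
            omega
          · rw [if_neg h3, hP0]
            omega
  · -- carry-free
    apply not_dvd_of_carry_free hp
    intro t ht
    have hpt : ∀ i : Fin m,
        (if (i : ℕ) = 0 then A0 else if (i : ℕ) = 1 then B0 else if (i : ℕ) = 2 then C0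
          else if (i : ℕ) < 3 + x then T0 else P0) % p ^ t
        = (if (i : ℕ) = 0 then A0 % p ^ t else if (i : ℕ) = 1 then B0 % p ^ t
          else if (i : ℕ) = 2 then C0 % p ^ t
          else if (i : ℕ) < 3 + x then T0 % p ^ t else P0 % p ^ t) := by
      intro i; split_ifs <;> rfl
    beta_reduce
    rw [Finset.sum_congr rfl (fun i _ => hpt i), sum_ite_eval4 hx3, hz2]
    by_cases hcase : t ≤ E
    · obtain ⟨u, hu⟩ : ∃ u, E = t + u := ⟨E - t, by omega⟩
      have hAm : A0 % p ^ t ≤ ca * gs p t := modg_le hp1 hcaP t _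
      have hBm : B0 % p ^ t ≤ cb * gs p t := modg_le hp1 hcbP t _
      have hCm : C0 % p ^ t ≤ r * gs p t := by
        have hC2 : C0 = p ^ t * (DD p n s * p ^ (u + 1) + y * p ^ u) + r * gs p E := by
          rw [hC0, hP0, hu, show t + u + 1 = t + (u + 1) by omega, pow_add, pow_add]
          ring
        rw [hC2, Nat.mul_add_mod]
        exact modg_le hp1 hrP t _
      have hTm : T0 % p ^ t = 0 := by
        have hT2 : T0 = p ^ t * (DD p n (s + 1) * p ^ u) := by
          rw [hT0, hu, pow_add]; ring
        rw [hT2, Nat.mul_mod_right]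
      have hPm : P0 % p ^ t = 0 := by
        have hP2 : P0 = p ^ t * (DD p n s * p ^ (u + 1)) := by
          rw [hP0, hu, show t + u + 1 = t + (u + 1) by omega, pow_add]; ring
        rw [hP2, Nat.mul_mod_right]
      have hbud := budget_eq hp1 hr t
      have hxz : x * (T0 % p ^ t) = 0 := by rw [hTm, Nat.mul_zero]
      have hzz : z * (P0 % p ^ t) = 0 := by rw [hPm, Nat.mul_zero]
      omega
    · push_neg at hcase
      obtain ⟨u, hu⟩ : ∃ u, t = (E + 1) + u := ⟨t - (E + 1), by omega⟩
      have hpEu : 0 < p ^ u := Nat.pow_pos hp1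
      have hpE : 0 < p ^ E := Nat.pow_pos hp1
      have hppE : (p - 1) * p ^ E + p ^ E = p * p ^ E := by
        have h8 : p - 1 + 1 = p := by omega
        calc (p - 1) * p ^ E + p ^ E = ((p - 1) + 1) * p ^ E := by ring
        _ = p * p ^ E := by rw [h8]
      have hps : p ^ (E + 1) = p * p ^ E := by rw [pow_succ]; ring
      have hAm : A0 % p ^ t = p ^ (E + 1) * ((ca * gs p s) % p ^ u) + ca * gs p (E + 1) := by
        have h9 : A0 = p ^ (E + 1) * (ca * gs p s) + ca * gs p (E + 1) := by
          rw [hA0, hgse]; ring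
        rw [h9, hu]
        exact mod_split hp1 (gs_lt hp1 hcaP (E + 1))
      have hBm : B0 % p ^ t = p ^ (E + 1) * ((cb * gs p s) % p ^ u) + cb * gs p (E + 1) := by
        have h9 : B0 = p ^ (E + 1) * (cb * gs p s) + cb * gs p (E + 1) := by
          rw [hB0, hgse]; ring
        rw [h9, hu]
        exact mod_split hp1 (gs_lt hp1 hcbP (E + 1))
      have hlo : y * p ^ E + r * gs p E < p ^ (E + 1) := by
        have h1 : r * gs p E < p ^ E := gs_lt hp1 hrP E
        have h3 : (y + 1) * p ^ E ≤ (p - 1) * p ^ E := Nat.mul_le_mul_right _ (by omega)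
        have h4 : (y + 1) * p ^ E = y * p ^ E + p ^ E := by ring
        omega
      have hCm : C0 % p ^ t = p ^ (E + 1) * (DD p n s % p ^ u) + (y * p ^ E + r * gs p E) := by
        have h9 : C0 = p ^ (E + 1) * DD p n s + (y * p ^ E + r * gs p E) := by
          rw [hC0, hP0]; ring
        rw [h9, hu]
        exact mod_split hp1 hlo
      have hTlo : ℓ₁ * p ^ E < p ^ (E + 1) := by
        have h3 : ℓ₁ * p ^ E ≤ (p - 1) * p ^ E := Nat.mul_le_mul_right _ hlp
        omega
      have hTm : T0 % p ^ t = p ^ (E + 1) * (DD p n s % p ^ u) + ℓ₁ * p ^ E := by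
        have h9 : T0 = p ^ (E + 1) * DD p n s + ℓ₁ * p ^ E := by
          rw [hT0, hDs1, hps]; ring
        rw [h9, hu]
        exact mod_split hp1 hTlo
      have hPm : P0 % p ^ t = p ^ (E + 1) * (DD p n s % p ^ u) := by
        have h9 : P0 = p ^ (E + 1) * DD p n s + 0 := by rw [hP0]; ring
        rw [h9, hu]
        have h10 := mod_split hp1 (σ := E + 1) (u := u) (h := DD p n s)
          (lo := 0) (Nat.pow_pos hp1)
        simpa using h10
      rw [hAm, hBm, hCm, hTm, hPm]
      have hQ : (ca * gs p s) % p ^ u + (cb * gs p s) % p ^ u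
          + (x + z + 1) * (DD p n s % p ^ u) + 1 ≤ p ^ u := by
        have hq1 : (ca * gs p s) % p ^ u ≤ ca * gs p u := modg_le hp1 hcaP u s
        have hq2 : (cb * gs p s) % p ^ u ≤ cb * gs p u := modg_le hp1 hcbP u s
        have hq3 : (m - 2) * (DD p n s % p ^ u) ≤ r * gs p u :=
          digit_bound hp1 hn (fun j (hj : j ≤ s) => hS j hj) u s le_rfl
        rw [hm2] at hq3
        have hbud := budget_eq hp1 hr u
        omega
      have htot : p ^ (E + 1) * ((ca * gs p s) % p ^ u + (cb * gs p s) % p ^ u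
          + (x + z + 1) * (DD p n s % p ^ u)) + p ^ (E + 1) ≤ p ^ (E + 1) * p ^ u := by
        calc p ^ (E + 1) * ((ca * gs p s) % p ^ u + (cb * gs p s) % p ^ u
              + (x + z + 1) * (DD p n s % p ^ u)) + p ^ (E + 1)
            = p ^ (E + 1) * ((ca * gs p s) % p ^ u + (cb * gs p s) % p ^ u
              + (x + z + 1) * (DD p n s % p ^ u) + 1) := by ring
        _ ≤ p ^ (E + 1) * p ^ u := Nat.mul_le_mul_left _ hQ
      have hpt2 : p ^ t = p ^ (E + 1) * p ^ u := by rw [hu, pow_add]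
      have hexp : p ^ (E + 1) * ((ca * gs p s) % p ^ u) + ca * gs p (E + 1)
          + (p ^ (E + 1) * ((cb * gs p s) % p ^ u) + cb * gs p (E + 1))
          + (p ^ (E + 1) * (DD p n s % p ^ u) + (y * p ^ E + r * gs p E))
          + x * (p ^ (E + 1) * (DD p n s % p ^ u) + ℓ₁ * p ^ E)
          + z * (p ^ (E + 1) * (DD p n s % p ^ u))
          = p ^ (E + 1) * ((ca * gs p s) % p ^ u + (cb * gs p s) % p ^ u
            + (x + z + 1) * (DD p n s % p ^ u))
            + (ca * gs p (E + 1) + cb * gs p (E + 1) + y * p ^ E + x * ℓ₁ * p ^ E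
              + r * gs p E) := by ring
      rw [hexp]
      omega

/-! ### Value of `nu` -/

lemma w_pos (ha : 1 ≤ a) (hb : 1 ≤ b) (hn : 1 ≤ n) : ∀ i : Fin m, 1 ≤ wfun a b n m i := by
  intro i
  rw [wfun]
  split_ifs <;> omega

lemma nu_A {𝕜 : Type*} [Field 𝕜] [CharP 𝕜 p] (hp : p.Prime)
    (hca : a * ca = p - 1) (hcb : b * cb = p - 1)
    (hr : ca + cb + r + 1 = p) (ha : 1 ≤ a) (hb : 1 ≤ b) (hn : 1 ≤ n) (hm : 3 ≤ m)
    (hA : ∀ j, (m - 2) * ll p n j ≤ r) (e : ℕ) :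
    nu (∑ i, X i ^ wfun a b n m i : MvPolynomial (Fin m) 𝕜) (p ^ e)
      = ca * gs p e + cb * gs p e + (m - 2) * DD p n e := by
  apply nu_eq_of hp (w_pos ha hb hn)
  · intro N hN
    obtain ⟨k, hsum, hcap, hnd⟩ := hN
    have hub := upper_bound hp.one_le hca hcb ha hb hn hm (le_refl e) k hcap ?_
    · rw [hsum] at hub
      have he0 : e - e = 0 := by omega
      rw [he0, pow_zero, one_mul] at hub
      omega
    · have he0 : e - e = 0 := by omega
      rw [he0, pow_zero]
      simp [Nat.mod_one]
  · exact feas_A hp hca hcb hr ha hb hn hm hA e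

lemma nu_B {𝕜 : Type*} [Field 𝕜] [CharP 𝕜 p] (hp : p.Prime)
    (hca : a * ca = p - 1) (hcb : b * cb = p - 1)
    (hr : ca + cb + r + 1 = p) (ha : 1 ≤ a) (hb : 1 ≤ b) (hn : 1 ≤ n) (hm : 3 ≤ m) {s : ℕ}
    (hS : ∀ j, j ≤ s → (m - 2) * ll p n j ≤ r)
    (hB : r < (m - 2) * ll p n (s + 1)) (E : ℕ) :
    nu (∑ i, X i ^ wfun a b n m i : MvPolynomial (Fin m) 𝕜) (p ^ (s + 1 + E)) + 1
      = p ^ (E + 1) * (ca * gs p s + cb * gs p s + (m - 2) * DD p n s + 1) := by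
  obtain ⟨S, hSeq, hfeas⟩ := feas_B hp hca hcb hr ha hb hn hm hS hB E
  have hnu : nu (∑ i, X i ^ wfun a b n m i : MvPolynomial (Fin m) 𝕜) (p ^ (s + 1 + E)) = S := by
    apply nu_eq_of hp (w_pos ha hb hn)
    · intro N hN
      obtain ⟨k, hsum, hcap, hnd⟩ := hN
      have hes : s ≤ s + 1 + E := by omega
      have hub := upper_bound hp.one_le hca hcb ha hb hn hm hes k hcap ?_
      · rw [hsum] at hub
        have he0 : s + 1 + E - s = E + 1 := by omega
        rw [he0] at hub
        omega
      · have hcar := sum_mod_of_not_dvd hp hnd (s + 1 + E - s)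
        rw [hcar]
        exact Nat.mod_lt _ (Nat.pow_pos hp.pos)
    · exact hfeas
  rw [hnu, hSeq]

/-! ### p-adic valuation of `K` -/

lemma K_val (hp : p.Prime) (hr : ca + cb + r + 1 = p) (hr1 : 1 ≤ r) (hn : 1 ≤ n) {d : ℕ}
    (hdn : p ^ d ≤ n) :
    ∀ t s, d ≤ s → (∀ j, j ≤ s → (m - 2) * ll p n j ≤ r) →
      p ^ t ∣ (ca * gs p s + cb * gs p s + (m - 2) * DD p n s + 1) → t + d ≤ s := by
  intro t
  induction t with
  | zero => intro s hs _ _; omega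
  | succ t ih =>
    intro s hs hSS hdvd
    have hp1 : 1 ≤ p := hp.one_le
    have hp2 : 2 ≤ p := hp.two_le
    have hs1 : 1 ≤ s := by
      rcases Nat.eq_zero_or_pos d with rfl | hd1
      · -- d = 0 : then show 1 ≤ s or handle directly; since hdn : 1 ≤ n always true, need s ≥ 1
        -- If s = 0 : K 0 = 1, and p^(t+1) ∣ 1 is impossible
        by_contra hcon
        push_neg at hcon
        have hs0 : s = 0 := by omega
        rw [hs0, gs_zero, DD_zero] at hdvd
        simp only [Nat.mul_zero, Nat.zero_add] at hdvd
        have := Nat.le_of_dvd (by omega) hdvd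
        have h2 : 2 ≤ p ^ (t + 1) := by
          calc 2 ≤ p := hp2
          _ = p ^ 1 := (pow_one p).symm
          _ ≤ p ^ (t + 1) := Nat.pow_le_pow_right hp1 (by omega)
        omega
      · omega
    obtain ⟨s', rfl⟩ : ∃ s', s = s' + 1 := ⟨s - 1, by omega⟩
    have hgs : gs p (s' + 1) = p * gs p s' + 1 := gs_succ p s'
    have hDD : DD p n (s' + 1) = p * DD p n s' + ll p n (s' + 1) := DD_succ hp1 hn s'
    set c := ca + cb + (m - 2) * ll p n (s' + 1) + 1 with hc
    set K' := ca * gs p s' + cb * gs p s' + (m - 2) * DD p n s' + 1 with hK'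
    have hiden : ca * gs p (s' + 1) + cb * gs p (s' + 1) + (m - 2) * DD p n (s' + 1) + 1 + p
        = p * K' + c := by
      rw [hgs, hDD, hc, hK']; ring
    have hpd : p ∣ (ca * gs p (s' + 1) + cb * gs p (s' + 1) + (m - 2) * DD p n (s' + 1) + 1) :=
      dvd_trans (dvd_pow_self p (Nat.succ_ne_zero t)) hdvd
    have hpc : p ∣ c := by
      have h2 : p ∣ (ca * gs p (s' + 1) + cb * gs p (s' + 1) + (m - 2) * DD p n (s' + 1) + 1 + p) :=
        Nat.dvd_add hpd dvd_rfl
      have h3 : p ∣ p * K' := Dvd.intro _ rfl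
      have h4 : c = (ca * gs p (s' + 1) + cb * gs p (s' + 1) + (m - 2) * DD p n (s' + 1) + 1 + p)
          - p * K' := by omega
      rw [h4]
      exact Nat.dvd_sub h2 h3
    have hcle : c ≤ p := by
      have := hSS (s' + 1) le_rfl
      omega
    have hcpos : 1 ≤ c := by omega
    have hcp : c = p := by
      have := Nat.le_of_dvd (by omega) hpc
      omega
    have hml : (m - 2) * ll p n (s' + 1) = r := by omega
    have hKK : ca * gs p (s' + 1) + cb * gs p (s' + 1) + (m - 2) * DD p n (s' + 1) + 1
        = p * K' := by omega
    have hll1 : 1 ≤ ll p n (s' + 1) := by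
      rcases Nat.eq_zero_or_pos (ll p n (s' + 1)) with h | h
      · rw [h, Nat.mul_zero] at hml; omega
      · exact h
    have hsd : d ≤ s' := by
      by_contra hcon
      push_neg at hcon
      have h1 : DD p n (s' + 1) = 0 :=
        DD_eq_zero hn (le_trans (Nat.pow_le_pow_right hp1 (by omega)) hdn)
      have h2 : DD p n s' = 0 :=
        DD_eq_zero hn (le_trans (Nat.pow_le_pow_right hp1 (by omega)) hdn)
      rw [h1, h2] at hDD
      omega
    have hdvd' : p ^ t ∣ K' := by
      have h1 : p * p ^ t ∣ p * K' := by
        rw [← hKK, ← pow_succ']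
        exact hdvd
      exact (mul_dvd_mul_iff_left (by omega : p ≠ 0)).mp h1
    have := ih s' hsd (fun j hj => hSS j (by omega)) hdvd'
    omega

/-! ### Limits -/

lemma tendstoA (hp2 : 2 ≤ p) (hca : a * ca = p - 1) (hcb : b * cb = p - 1)
    (ha : 1 ≤ a) (hb : 1 ≤ b) (hn : 1 ≤ n) (hm : 3 ≤ m) :
    Tendsto (fun e : ℕ =>
        ((ca * gs p (e + 1) + cb * gs p (e + 1) + (m - 2) * DD p n (e + 1) : ℕ) : ℝ)
          / (p : ℝ) ^ (e + 1))
      atTop (nhds (1 / (a : ℝ) + 1 / (b : ℝ) + ((m : ℝ) - 2) / (n : ℝ))) := by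
  have hp1 : 1 ≤ p := by omega
  set X : ℝ := 1 / (a : ℝ) + 1 / (b : ℝ) + ((m : ℝ) - 2) / (n : ℝ) with hX
  clear_value X
  have haR : (0 : ℝ) < a := by exact_mod_cast ha
  have hbR : (0 : ℝ) < b := by exact_mod_cast hb
  have hnR : (0 : ℝ) < n := by exact_mod_cast hn
  have hpR : (0 : ℝ) < p := by positivity
  have haR1 : (1 : ℝ) ≤ (a : ℝ) := by exact_mod_cast ha
  have hbR1 : (1 : ℝ) ≤ (b : ℝ) := by exact_mod_cast hb
  have hnR1 : (1 : ℝ) ≤ (n : ℝ) := by exact_mod_cast hn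
  have hMcast : (((m - 2 : ℕ)) : ℝ) = (m : ℝ) - 2 := by
    have h2 : (2 : ℕ) ≤ m := by omega
    push_cast [Nat.cast_sub h2]
    ring
  have hMR : (0 : ℝ) ≤ (m : ℝ) - 2 := by
    have h2 : (2 : ℝ) ≤ (m : ℝ) := by exact_mod_cast (show (2:ℕ) ≤ m by omega)
    linarith
  have hbound : ∀ e : ℕ,
      X - (m : ℝ) * (1 / (p : ℝ)) ^ (e + 1) ≤
        ((ca * gs p (e + 1) + cb * gs p (e + 1) + (m - 2) * DD p n (e + 1) : ℕ) : ℝ)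
          / (p : ℝ) ^ (e + 1)
      ∧ ((ca * gs p (e + 1) + cb * gs p (e + 1) + (m - 2) * DD p n (e + 1) : ℕ) : ℝ)
          / (p : ℝ) ^ (e + 1) ≤ X := by
    intro e
    set A1 := ca * gs p (e + 1) with hA1
    set B1 := cb * gs p (e + 1) with hB1
    set D1 := DD p n (e + 1) with hD1
    have hf1 : a * A1 + 1 = p ^ (e + 1) := by
      rw [hA1, ← mul_assoc, hca]; exact gs_mul hp1 (e + 1)
    have hf2 : b * B1 + 1 = p ^ (e + 1) := by
      rw [hB1, ← mul_assoc, hcb]; exact gs_mul hp1 (e + 1)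
    have hpE1 : 1 ≤ p ^ (e + 1) := Nat.pow_pos hp1
    have hf3 : n * D1 + 1 ≤ p ^ (e + 1) := by
      have := DD_mul_le p hn (e + 1); rw [← hD1] at this; omega
    have hf4 : p ^ (e + 1) ≤ n * D1 + n := by
      have := pow_le_DD_succ hp1 hn (e + 1)
      rw [Nat.mul_add, mul_one, ← hD1] at this; omega
    clear_value A1 B1 D1
    have hPpos : (0 : ℝ) < (p : ℝ) ^ (e + 1) := by positivity
    have hf1R : (a : ℝ) * (A1 : ℝ) + 1 = (p : ℝ) ^ (e + 1) := by exact_mod_cast hf1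
    have hf2R : (b : ℝ) * (B1 : ℝ) + 1 = (p : ℝ) ^ (e + 1) := by exact_mod_cast hf2
    have hf3R : (n : ℝ) * (D1 : ℝ) + 1 ≤ (p : ℝ) ^ (e + 1) := by exact_mod_cast hf3
    have hf4R : (p : ℝ) ^ (e + 1) ≤ (n : ℝ) * (D1 : ℝ) + (n : ℝ) := by exact_mod_cast hf4
    have hsum : ((A1 + B1 + (m - 2) * D1 : ℕ) : ℝ)
        = (A1 : ℝ) + (B1 : ℝ) + ((m : ℝ) - 2) * (D1 : ℝ) := by
      push_cast
      rw [hMcast]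
    have hDRnn : (0 : ℝ) ≤ (D1 : ℝ) := Nat.cast_nonneg _
    have hXP : X * ((p : ℝ) ^ (e + 1)) = (p : ℝ) ^ (e + 1) / a + (p : ℝ) ^ (e + 1) / b
        + ((m : ℝ) - 2) * ((p : ℝ) ^ (e + 1) / n) := by
      rw [hX]; ring
    constructor
    · have hXm : X * ((p : ℝ) ^ (e + 1)) - m ≤ (A1 : ℝ) + (B1 : ℝ) + ((m : ℝ) - 2) * (D1 : ℝ) := by
        have l1 : (p : ℝ) ^ (e + 1) / a ≤ (A1 : ℝ) + 1 := by
          rw [div_le_iff₀ haR, show ((A1 : ℝ) + 1) * a = a * A1 + a by ring]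
          linarith [hf1R, haR1]
        have l2 : (p : ℝ) ^ (e + 1) / b ≤ (B1 : ℝ) + 1 := by
          rw [div_le_iff₀ hbR, show ((B1 : ℝ) + 1) * b = b * B1 + b by ring]
          linarith [hf2R, hbR1]
        have l3 : (p : ℝ) ^ (e + 1) / n ≤ (D1 : ℝ) + 1 := by
          rw [div_le_iff₀ hnR, show ((D1 : ℝ) + 1) * n = n * D1 + n by ring]
          linarith [hf4R]
        have l4 : ((m : ℝ) - 2) * ((p : ℝ) ^ (e + 1) / n) ≤ ((m : ℝ) - 2) * ((D1 : ℝ) + 1) :=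
          mul_le_mul_of_nonneg_left l3 hMR
        have l5 : ((m : ℝ) - 2) * ((D1 : ℝ) + 1) = ((m : ℝ) - 2) * (D1 : ℝ) + ((m : ℝ) - 2) := by
          ring
        linarith [l1, l2, l4, l5, hXP]
      have hpowinv : ((1 : ℝ) / p) ^ (e + 1) = 1 / ((p : ℝ) ^ (e + 1)) := by
        rw [div_pow, one_pow]
      have heq : X - (m : ℝ) * (1 / (p : ℝ)) ^ (e + 1)
          = (X * ((p : ℝ) ^ (e + 1)) - m) / ((p : ℝ) ^ (e + 1)) := by
        rw [hpowinv]
        field_simp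
      rw [heq, hsum]
      exact (div_le_div_iff_of_pos_right hPpos).mpr hXm
    · rw [hsum, div_le_iff₀ hPpos]
      have u1 : (A1 : ℝ) ≤ (p : ℝ) ^ (e + 1) / a := by
        rw [le_div_iff₀ haR, show (A1 : ℝ) * a = a * A1 by ring]
        linarith [hf1R]
      have u2 : (B1 : ℝ) ≤ (p : ℝ) ^ (e + 1) / b := by
        rw [le_div_iff₀ hbR, show (B1 : ℝ) * b = b * B1 by ring]
        linarith [hf2R]
      have u3 : (D1 : ℝ) ≤ (p : ℝ) ^ (e + 1) / n := by
        rw [le_div_iff₀ hnR, show (D1 : ℝ) * n = n * D1 by ring]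
        linarith [hf3R]
      have u4 : ((m : ℝ) - 2) * (D1 : ℝ) ≤ ((m : ℝ) - 2) * ((p : ℝ) ^ (e + 1) / n) :=
        mul_le_mul_of_nonneg_left u3 hMR
      linarith [u1, u2, u4]
  have hlow : Tendsto (fun e : ℕ => X - (m : ℝ) * (1 / (p : ℝ)) ^ (e + 1)) atTop (nhds X) := by
    have h0 : Tendsto (fun t : ℕ => ((1 : ℝ) / p) ^ t) atTop (nhds 0) :=
      tendsto_pow_atTop_nhds_zero_of_lt_one (by positivity)
        (by rw [div_lt_one hpR]; exact_mod_cast hp2)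
    have h1 := (h0.comp (tendsto_add_atTop_nat 1)).const_mul (m : ℝ)
    have h2 := (tendsto_const_nhds : Tendsto (fun _ : ℕ => X) atTop (nhds X)).sub h1
    simpa using h2
  exact tendsto_of_tendsto_of_tendsto_of_le_of_le hlow tendsto_const_nhds
    (fun e => (hbound e).1) (fun e => (hbound e).2)

lemma tendstoB (hp2 : 2 ≤ p) {K s : ℕ} {f : ℕ → ℕ}
    (hf : ∀ e, s ≤ e → f e + 1 = p ^ (e - s + 1) * K) :
    Tendsto (fun e : ℕ => ((f e : ℕ) : ℝ) / (p : ℝ) ^ (e + 1))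
      atTop (nhds ((K : ℝ) / (p : ℝ) ^ s)) := by
  have hpR : (0 : ℝ) < p := by positivity
  have h0 : Tendsto (fun t : ℕ => ((1 : ℝ) / p) ^ t) atTop (nhds 0) :=
    tendsto_pow_atTop_nhds_zero_of_lt_one (by positivity)
      (by rw [div_lt_one hpR]; exact_mod_cast hp2)
  have h1 : Tendsto (fun e : ℕ => (K : ℝ) / (p : ℝ) ^ s - ((1 : ℝ) / p) ^ (e + 1))
      atTop (nhds ((K : ℝ) / (p : ℝ) ^ s - 0)) :=
    tendsto_const_nhds.sub (h0.comp (tendsto_add_atTop_nat 1))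
  rw [sub_zero] at h1
  apply h1.congr'
  filter_upwards [eventually_ge_atTop s] with e he
  have hcast : ((f e : ℕ) : ℝ) + 1 = (p : ℝ) ^ (e - s + 1) * K := by
    exact_mod_cast congrArg (Nat.cast : ℕ → ℝ) (hf e he)
  have hsplit : (p : ℝ) ^ (e + 1) = (p : ℝ) ^ (e - s + 1) * (p : ℝ) ^ s := by
    rw [← pow_add]; congr 1; omega
  have hne1 : (p : ℝ) ^ s ≠ 0 := by positivity
  have hne2 : (p : ℝ) ^ (e - s + 1) ≠ 0 := by positivity
  have hne3 : (p : ℝ) ^ (e + 1) ≠ 0 := by positivity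
  have hfe : ((f e : ℕ) : ℝ) = (p : ℝ) ^ (e - s + 1) * K - 1 := by linarith
  rw [hfe, hsplit, sub_div, mul_comm ((p : ℝ) ^ (e - s + 1)) ((K : ℝ))]
  rw [mul_comm ((p : ℝ) ^ (e - s + 1)) ((p : ℝ) ^ s)] at hsplit ⊢
  rw [mul_div_mul_right _ _ hne2]
  congr 1
  rw [div_pow, one_pow, hsplit]

end Main

end UDen

open UDen in
/-- Theorem (unbounded denominators). -/
theorem stmt3 {p m n a b d : ℕ} (hp : p.Prime) {k : Type*} [Field k] [PerfectField k]
    [CharP k p] (hm : 2 < m)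
    (ha : 1 < a) (hab : a ≤ b) (hne : ¬(a = 2 ∧ b = 2)) (hn : b ≤ n)
    (hpmod : (p : ℤ) ≡ 1 [ZMOD (Nat.lcm a b : ℤ)])
    (hd : 0 < d) (hdn : p ^ d ≤ n) (hnd : n < p ^ (d + 1))
    (F : ℚ)
    (hF : Tendsto (fun e : ℕ =>
        (nu (∑ i : Fin m, (X i : MvPolynomial (Fin m) k) ^
            (if (i : ℕ) = 0 then a else if (i : ℕ) = 1 then b else n)) (p ^ (e + 1)) : ℝ) /
          (p : ℝ) ^ (e + 1))
      atTop (nhds (F : ℝ)))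
    (hFne : F ≠ 1 / (a : ℚ) + 1 / (b : ℚ) + ((m : ℚ) - 2) / (n : ℚ)) :
    d ≤ padicValNat p F.den := by
  classical
  haveI : Fact p.Prime := ⟨hp⟩
  have hp2 : 2 ≤ p := hp.two_le
  have hp1 : 1 ≤ p := by omega
  have ha2 : 2 ≤ a := ha
  have hb2 : 2 ≤ b := le_trans ha hab
  have hb3 : 3 ≤ b := by
    rcases Nat.lt_or_ge b 3 with h | h
    · exact absurd ⟨by omega, by omega⟩ hne
    · exact h
  have hn1 : 1 ≤ n := by omega
  have hm3 : 3 ≤ m := by omega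
  have ha1 : 1 ≤ a := by omega
  have hb1 : 1 ≤ b := by omega
  have hlcm : (Nat.lcm a b : ℤ) ∣ (p : ℤ) - 1 := Int.ModEq.dvd hpmod.symm
  have hlcmN : Nat.lcm a b ∣ p - 1 := by
    have h2 : ((p - 1 : ℕ) : ℤ) = (p : ℤ) - 1 := by
      push_cast [Nat.cast_sub hp1]; ring
    rw [← h2] at hlcm
    exact_mod_cast hlcm
  have hadvd : a ∣ p - 1 := dvd_trans (Nat.dvd_lcm_left a b) hlcmN
  have hbdvd : b ∣ p - 1 := dvd_trans (Nat.dvd_lcm_right a b) hlcmN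
  set ca := (p - 1) / a with hcadef
  set cb := (p - 1) / b with hcbdef
  have hca : a * ca = p - 1 := Nat.mul_div_cancel' hadvd
  have hcb : b * cb = p - 1 := Nat.mul_div_cancel' hbdvd
  have hcacb : ca + cb + 2 ≤ p := by
    have h1 : 2 * ca ≤ p - 1 := by
      calc 2 * ca ≤ a * ca := Nat.mul_le_mul_right _ ha2
      _ = p - 1 := hca
    have h2 : 3 * cb ≤ p - 1 := by
      calc 3 * cb ≤ b * cb := Nat.mul_le_mul_right _ hb3
      _ = p - 1 := hcb
    omega
  set r := p - 1 - (ca + cb) with hrdef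
  have hr : ca + cb + r + 1 = p := by omega
  have hr1 : 1 ≤ r := by omega
  have hpoly : (∑ i : Fin m, (X i : MvPolynomial (Fin m) k) ^
      (if (i : ℕ) = 0 then a else if (i : ℕ) = 1 then b else n))
      = ∑ i : Fin m, (X i : MvPolynomial (Fin m) k) ^ wfun a b n m i := rfl
  rw [hpoly] at hF
  by_cases hcase : ∀ j, (m - 2) * ll p n j ≤ r
  · exfalso
    have hFeq : (fun e : ℕ =>
        (nu (∑ i : Fin m, (X i : MvPolynomial (Fin m) k) ^ wfun a b n m i) (p ^ (e + 1)) : ℝ) /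
          (p : ℝ) ^ (e + 1))
        = fun e : ℕ =>
          ((ca * gs p (e + 1) + cb * gs p (e + 1) + (m - 2) * DD p n (e + 1) : ℕ) : ℝ)
            / (p : ℝ) ^ (e + 1) := by
      funext e
      rw [nu_A hp hca hcb hr ha1 hb1 hn1 hm3 hcase (e + 1)]
    rw [hFeq] at hF
    have hlim := tendstoA (p := p) (ca := ca) (cb := cb) hp2 hca hcb ha1 hb1 hn1 hm3
    have hFX : (F : ℝ) = 1 / (a : ℝ) + 1 / (b : ℝ) + ((m : ℝ) - 2) / (n : ℝ) :=
      tendsto_nhds_unique hF hlim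
    apply hFne
    apply Rat.cast_injective (α := ℝ)
    rw [hFX]
    push_cast
    ring
  · push_neg at hcase
    have hex : ∃ j, r < (m - 2) * ll p n j := hcase
    set c0 := Nat.find hex with hc0
    have hPc : r < (m - 2) * ll p n c0 := Nat.find_spec hex
    have hmin : ∀ j, j < c0 → (m - 2) * ll p n j ≤ r := by
      intro j hj
      have := Nat.find_min hex hj
      omega
    have hzero : ∀ j, j ≤ d → ll p n j = 0 := by
      intro j hj
      rcases Nat.eq_zero_or_pos j with rfl | hjpos
      · simp [ll, DD_zero]
      · obtain ⟨j', rfl⟩ : ∃ j', j = j' + 1 := ⟨j - 1, by omega⟩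
        have h1 : DD p n (j' + 1) = 0 :=
          DD_eq_zero hn1 (le_trans (Nat.pow_le_pow_right hp1 hj) hdn)
        have h2 : ll p n (j' + 1) = DD p n (j' + 1) - p * DD p n j' := by
          rw [ll]; simp
        omega
    have hdc : d < c0 := by
      by_contra hcon
      push_neg at hcon
      rw [hzero c0 hcon, Nat.mul_zero] at hPc
      omega
    set s := c0 - 1 with hsdef
    have hc0s : c0 = s + 1 := by omega
    have hds : d ≤ s := by omega
    have hS : ∀ j, j ≤ s → (m - 2) * ll p n j ≤ r := fun j hj => hmin j (by omega)
    have hB : r < (m - 2) * ll p n (s + 1) := by rw [← hc0s]; exact hPc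
    set K := ca * gs p s + cb * gs p s + (m - 2) * DD p n s + 1 with hKdef
    have hK1 : 1 ≤ K := by omega
    have hnuB : ∀ e, s ≤ e →
        nu (∑ i : Fin m, (X i : MvPolynomial (Fin m) k) ^ wfun a b n m i) (p ^ (e + 1)) + 1
          = p ^ (e - s + 1) * K := by
      intro e he
      have h1 := nu_B (𝕜 := k) hp hca hcb hr ha1 hb1 hn1 hm3 hS hB (e - s)
      rw [show s + 1 + (e - s) = e + 1 by omega] at h1
      exact h1
    have hlim := tendstoB (p := p) hp2 (K := K) (s := s) hnuB
    have hFK : (F : ℝ) = (K : ℝ) / (p : ℝ) ^ s := tendsto_nhds_unique hF hlim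
    have hFKQ : F = (K : ℚ) / (p : ℚ) ^ s := by
      apply Rat.cast_injective (α := ℝ)
      rw [hFK]
      push_cast
      ring
    set t0 := padicValNat p K with ht0
    have ht0d : t0 + d ≤ s :=
      K_val hp hr hr1 hn1 hdn t0 s hds hS pow_padicValNat_dvd
    have hKQ : (K : ℚ) ≠ 0 := by
      exact_mod_cast (by omega : K ≠ 0)
    have hpQ : ((p : ℚ)) ≠ 0 := by
      exact_mod_cast (by omega : p ≠ 0)
    have hpsQ : ((p : ℚ)) ^ s ≠ 0 := pow_ne_zero _ hpQ
    have hv : padicValRat p F = (t0 : ℤ) - s := by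
      rw [hFKQ, padicValRat.div hKQ hpsQ, padicValRat.of_nat,
        padicValRat.pow _, padicValRat.self hp.one_lt, ht0]
      push_cast
      ring
    rw [padicValRat_def] at hv
    have hnumnn : 0 ≤ (padicValInt p F.num : ℤ) := Int.ofNat_nonneg _
    omega
end
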